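/- arXiv:2011.05085 — 8 statements merged into one kernel-verified Lean document; each statement's English description precedes it below -/
import Mathlib

section
/- Let V be a finite set with |V| = n ≥ 2 and let 𝒢 ⊆ 2^V be a family of sets that is proper, laminar, and complement-free (it does not contain both a set and its complement in V). Then |𝒢| ≤ 2n - 3. -/
open Finset

/-- Two finite sets overlap if their intersection and both differences are nonempty. -/
def overlap {V : Type*} [DecidableEq V] (X Y : Finset V) : Prop :=
  (X ∩ Y).Nonempty ∧ (X \ Y).Nonempty ∧ (Y \ X).Nonempty

/-- Two shores cross if all four corner sets are nonempty. -/
def crossing {V : Type*} [DecidableEq V] [Fintype V] (X Y : Finset V) : Prop :=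
  (X ∩ Y).Nonempty ∧ (X \ Y).Nonempty ∧ (Y \ X).Nonempty ∧ (Xᶜ ∩ Yᶜ).Nonempty

/-- X is the shore of a cut: nonempty and proper. -/
def isCutShore {V : Type*} [Fintype V] (X : Finset V) : Prop :=
  X.Nonempty ∧ X ≠ Finset.univ

/-- The weight of the cut Δ(X) in the weighted graph with (symmetric) weights w. -/
noncomputable def cutWeight {V : Type*} [DecidableEq V] [Fintype V]
    (w : V → V → ℝ) (X : Finset V) : ℝ :=
  (1/2) * ∑ p : V × V,
    if (p.1 ∈ X ∧ p.2 ∉ X) ∨ (p.2 ∈ X ∧ p.1 ∉ X) then w p.1 p.2 else 0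

/-- Δ(X) is a minimum cut. -/
def isMinCut {V : Type*} [DecidableEq V] [Fintype V] (w : V → V → ℝ) (X : Finset V) : Prop :=
  isCutShore X ∧ ∀ Y : Finset V, isCutShore Y → cutWeight w X ≤ cutWeight w Y

/-- The characteristic vector of the cut Δ(X) among the edges (pairs of positive weight). -/
noncomputable def cutVec {V : Type*} [DecidableEq V] [Fintype V]
    (w : V → V → ℝ) (X : Finset V) : V × V → ℝ :=
  fun p => if (((p.1 ∈ X ∧ p.2 ∉ X) ∨ (p.2 ∈ X ∧ p.1 ∉ X)) ∧ 0 < w p.1 p.2) then 1 else 0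

lemma lam_bound {V : Type*} [DecidableEq V] :
    ∀ (U : Finset V) (H : Finset (Finset V)),
      (∀ X ∈ H, X.Nonempty ∧ X ⊆ U) →
      (∀ X ∈ H, ∀ Y ∈ H, X ⊆ Y ∨ Y ⊆ X ∨ Disjoint X Y) →
      H.card ≤ 2 * U.card - 1 := by
  intro U
  induction U using Finset.strongInduction with
  | _ U ih =>
    intro H hmem hlam
    set H' := H.erase U with hH'
    have hstep : H'.card ≤ 2 * U.card - 2 := by
      rcases H'.eq_empty_or_nonempty with he | hne
      · simp [he]
      · obtain ⟨M, hM, hMmax⟩ := H'.exists_max_image Finset.card hne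
        have hMH : M ∈ H := Finset.mem_of_mem_erase hM
        have hMne : M.Nonempty := (hmem M hMH).1
        have hMU : M ⊆ U := (hmem M hMH).2
        have hMneU : M ≠ U := Finset.ne_of_mem_erase hM
        have hMss : M ⊂ U := ssubset_of_subset_of_ne hMU hMneU
        have hUMne : (U \ M).Nonempty := by
          obtain ⟨x, hxU, hxM⟩ := Finset.exists_of_ssubset hMss
          exact ⟨x, Finset.mem_sdiff.mpr ⟨hxU, hxM⟩⟩
        have hUMss : U \ M ⊂ U := by
          exact Finset.sdiff_ssubset hMU hMne
        set A := H'.filter (fun X => X ⊆ M) with hA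
        set B := H'.filter (fun X => ¬ X ⊆ M) with hB
        have hcardsum : A.card + B.card = H'.card :=
          Finset.card_filter_add_card_filter_not (fun X => X ⊆ M)
        have hAbound : A.card ≤ 2 * M.card - 1 := by
          apply ih M hMss
          · intro X hX
            have hX' := Finset.mem_filter.mp hX
            exact ⟨(hmem X (Finset.mem_of_mem_erase hX'.1)).1, hX'.2⟩
          · intro X hX Y hY
            exact hlam X (Finset.mem_of_mem_erase (Finset.mem_filter.mp hX).1)
              Y (Finset.mem_of_mem_erase (Finset.mem_filter.mp hY).1)
        have hBbound : B.card ≤ 2 * (U \ M).card - 1 := by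
          apply ih (U \ M) hUMss
          · intro X hX
            have hX' := Finset.mem_filter.mp hX
            have hXH : X ∈ H := Finset.mem_of_mem_erase hX'.1
            refine ⟨(hmem X hXH).1, ?_⟩
            rcases hlam X hXH M hMH with h1 | h2 | h3
            · exact absurd h1 hX'.2
            · have : X = M := (Finset.eq_of_subset_of_card_le h2 (hMmax X hX'.1)).symm
              exact absurd (this ▸ Finset.Subset.rfl) hX'.2
            · intro x hx
              exact Finset.mem_sdiff.mpr ⟨(hmem X hXH).2 hx,
                fun hxM => Finset.disjoint_left.mp h3 hx hxM⟩
          · intro X hX Y hY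
            exact hlam X (Finset.mem_of_mem_erase (Finset.mem_filter.mp hX).1)
              Y (Finset.mem_of_mem_erase (Finset.mem_filter.mp hY).1)
        have hMcard : 1 ≤ M.card := Finset.card_pos.mpr hMne
        have hUMcard : (U \ M).card = U.card - M.card := Finset.card_sdiff_of_subset hMU
        have hUMpos : 1 ≤ (U \ M).card := Finset.card_pos.mpr hUMne
        have hMle : M.card < U.card := Finset.card_lt_card hMss
        omega
    have : H.card ≤ H'.card + 1 := by
      by_cases hU : U ∈ H
      · rw [hH', Finset.card_erase_of_mem hU]; omega
      · rw [hH', Finset.erase_eq_of_notMem hU]; omega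
    have hUpos : H.Nonempty → U.Nonempty := by
      rintro ⟨X, hX⟩
      exact ((hmem X hX).1).mono (hmem X hX).2
    rcases H.eq_empty_or_nonempty with he | hne
    · simp [he]
    · have := Finset.card_pos.mpr (hUpos hne)
      omega

lemma not_overlap_cases {V : Type*} [DecidableEq V] {X Y : Finset V}
    (h : ¬ ((X ∩ Y).Nonempty ∧ (X \ Y).Nonempty ∧ (Y \ X).Nonempty)) :
    X ⊆ Y ∨ Y ⊆ X ∨ Disjoint X Y := by
  by_contra hc
  push_neg at hc
  obtain ⟨h1, h2, h3⟩ := hc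
  exact h ⟨Finset.not_disjoint_iff_nonempty_inter.mp h3,
    Finset.sdiff_nonempty.mpr h1, Finset.sdiff_nonempty.mpr h2⟩


/-- A proper, laminar, complement-free family on an `n`-element universe (`n ≥ 2`)
has at most `2n-3` members. -/
theorem stmt1 {V : Type*} [DecidableEq V] [Fintype V] (n : ℕ) (hn : 2 ≤ n)
    (hcard : Fintype.card V = n) (G : Finset (Finset V))
    (hproper : ∅ ∉ G ∧ Finset.univ ∉ G)
    (hlaminar : ∀ X ∈ G, ∀ Y ∈ G, ¬ overlap X Y)
    (hcompfree : ∀ X ∈ G, Xᶜ ∉ G) :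
    G.card ≤ 2 * n - 3 := by
  simp only [overlap] at hlaminar
  have hV : Nonempty V := by
    rw [← Fintype.card_pos_iff]; omega
  obtain ⟨v₀⟩ := hV
  set f : Finset V → Finset V := fun X => if v₀ ∈ X then Xᶜ else X with hf
  have hGne : ∀ X ∈ G, X.Nonempty := fun X hX =>
    Finset.nonempty_iff_ne_empty.mpr (fun h => hproper.1 (h ▸ hX))
  have hGnu : ∀ X ∈ G, X ≠ Finset.univ := fun X hX h => hproper.2 (h ▸ hX)
  have hfv : ∀ X, v₀ ∉ f X := by
    intro X
    by_cases h : v₀ ∈ X <;> simp [hf, h]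
  have hinj : Set.InjOn f G := by
    intro X hX Y hY hXY
    by_cases hx : v₀ ∈ X <;> by_cases hy : v₀ ∈ Y <;>
      simp only [hf, if_pos, if_neg, hx, hy, if_true, if_false, ite_true, ite_false] at hXY
    · exact compl_injective hXY
    · rw [← hXY] at hY; exact absurd hY (hcompfree X hX)
    · rw [hXY] at hX; exact absurd hX (hcompfree Y hY)
    · exact hXY
  have hcardim : (G.image f).card = G.card := Finset.card_image_of_injOn hinj
  have hbound : (G.image f).card ≤ 2 * ({v₀}ᶜ : Finset V).card - 1 := by
    apply lam_bound
    · intro Z hZ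
      obtain ⟨X, hX, rfl⟩ := Finset.mem_image.mp hZ
      constructor
      · by_cases h : v₀ ∈ X
        · simp only [hf, if_pos h]
          rw [Finset.nonempty_iff_ne_empty, Ne, Finset.compl_eq_empty_iff]
          exact hGnu X hX
        · simpa [hf, h] using hGne X hX
      · intro x hx
        simp only [Finset.mem_compl, Finset.mem_singleton]
        rintro rfl
        exact hfv X hx
    · intro Z hZ W hW
      obtain ⟨X, hX, rfl⟩ := Finset.mem_image.mp hZ
      obtain ⟨Y, hY, rfl⟩ := Finset.mem_image.mp hW
      have h := not_overlap_cases (hlaminar X hX Y hY)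
      by_cases hx : v₀ ∈ X <;> by_cases hy : v₀ ∈ Y <;>
        simp only [hf, if_pos, if_neg, hx, hy, if_true, if_false, ite_true, ite_false]
      · rcases h with h | h | h
        · exact Or.inr (Or.inl (Finset.compl_subset_compl.mpr h))
        · exact Or.inl (Finset.compl_subset_compl.mpr h)
        · exact absurd hy (Finset.disjoint_left.mp h hx)
      · rcases h with h | h | h
        · exact absurd (h hx) hy
        · refine Or.inr (Or.inr (Finset.disjoint_left.mpr ?_))
          intro a ha hay
          exact (Finset.mem_compl.mp ha) (h hay)
        · refine Or.inr (Or.inl ?_)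
          intro a ha
          exact Finset.mem_compl.mpr (Finset.disjoint_right.mp h ha)
      · rcases h with h | h | h
        · refine Or.inr (Or.inr (Finset.disjoint_left.mpr ?_))
          intro a ha hay
          exact (Finset.mem_compl.mp hay) (h ha)
        · exact absurd (h hy) hx
        · refine Or.inl ?_
          intro a ha
          exact Finset.mem_compl.mpr (Finset.disjoint_left.mp h ha)
      · exact h
  have hcompl : ({v₀}ᶜ : Finset V).card = n - 1 := by
    rw [Finset.card_compl, Finset.card_singleton, hcard]
  omega
end

section
/- Let G = (V, w) be a weighted undirected graph with nonnegative edge weights, and let Δ(X), Δ(Y) be minimum cuts of G such that X and Y cross. Then the characteristic vectors (over edges of G) satisfy χ(Δ(X)) + χ(Δ(Y)) = χ(Δ(X∩Y)) + χ(Δ(X∪Y)); equivalently, there are no edges of positive weight between X\Y and Y\X. -/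
open Finset

private lemma pair_key {V : Type*} [DecidableEq V] (X Y : Finset V) (i j : V) (r : ℝ) :
    (if (i ∈ X ∧ j ∉ X) ∨ (j ∈ X ∧ i ∉ X) then r else 0) +
      (if (i ∈ Y ∧ j ∉ Y) ∨ (j ∈ Y ∧ i ∉ Y) then r else 0) =
    (if (i ∈ X ∩ Y ∧ j ∉ X ∩ Y) ∨ (j ∈ X ∩ Y ∧ i ∉ X ∩ Y) then r else 0) +
      (if (i ∈ X ∪ Y ∧ j ∉ X ∪ Y) ∨ (j ∈ X ∪ Y ∧ i ∉ X ∪ Y) then r else 0) +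
      2 * (if (i ∈ X \ Y ∧ j ∈ Y \ X) ∨ (j ∈ X \ Y ∧ i ∈ Y \ X) then r else 0) := by
  simp only [Finset.mem_inter, Finset.mem_union, Finset.mem_sdiff]
  by_cases ha : i ∈ X <;> by_cases hb : j ∈ X <;> by_cases hc : i ∈ Y <;> by_cases hd : j ∈ Y <;>
    simp [ha, hb, hc, hd] <;> ring

/-- Lemma on a quadrangle: for crossing minimum cuts `Δ(X)`, `Δ(Y)`,
`χ(Δ(X)) + χ(Δ(Y)) = χ(Δ(X∩Y)) + χ(Δ(X∪Y))`; equivalently there are no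
edges of positive weight between `X \ Y` and `Y \ X`. -/
theorem stmt4 {V : Type*} [DecidableEq V] [Fintype V] (w : V → V → ℝ)
    (hsym : ∀ i j, w i j = w j i) (hnn : ∀ i j, 0 ≤ w i j)
    (X Y : Finset V) (hX : isMinCut w X) (hY : isMinCut w Y)
    (hcross : crossing X Y) :
    cutVec w X + cutVec w Y = cutVec w (X ∩ Y) + cutVec w (X ∪ Y) ∧
    ∀ i ∈ X \ Y, ∀ j ∈ Y \ X, w i j = 0 := by
  obtain ⟨hXY, hXdY, hYdX, hcc⟩ := hcross
  -- X ∩ Y and X ∪ Y are cut shores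
  have hIs : isCutShore (X ∩ Y) := by
    constructor
    · exact hXY
    · intro h
      obtain ⟨y, hy⟩ := hYdX
      rw [Finset.mem_sdiff] at hy
      have := Finset.mem_univ y
      rw [← h, Finset.mem_inter] at this
      exact hy.2 this.1
  have hUs : isCutShore (X ∪ Y) := by
    constructor
    · obtain ⟨x, hx⟩ := hXY
      exact ⟨x, Finset.mem_union_left _ (Finset.mem_inter.mp hx).1⟩
    · intro h
      obtain ⟨z, hz⟩ := hcc
      rw [Finset.mem_inter, Finset.mem_compl, Finset.mem_compl] at hz
      have := Finset.mem_univ z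
      rw [← h, Finset.mem_union] at this
      tauto
  set E : V × V → ℝ := fun p =>
    if (p.1 ∈ X \ Y ∧ p.2 ∈ Y \ X) ∨ (p.2 ∈ X \ Y ∧ p.1 ∈ Y \ X) then w p.1 p.2 else 0 with hE
  have hsum : cutWeight w X + cutWeight w Y =
      cutWeight w (X ∩ Y) + cutWeight w (X ∪ Y) + ∑ p : V × V, E p := by
    have key : (∑ p : V × V,
          if (p.1 ∈ X ∧ p.2 ∉ X) ∨ (p.2 ∈ X ∧ p.1 ∉ X) then w p.1 p.2 else 0) +
        (∑ p : V × V,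
          if (p.1 ∈ Y ∧ p.2 ∉ Y) ∨ (p.2 ∈ Y ∧ p.1 ∉ Y) then w p.1 p.2 else 0) =
        (∑ p : V × V,
          if (p.1 ∈ X ∩ Y ∧ p.2 ∉ X ∩ Y) ∨ (p.2 ∈ X ∩ Y ∧ p.1 ∉ X ∩ Y) then w p.1 p.2 else 0) +
        (∑ p : V × V,
          if (p.1 ∈ X ∪ Y ∧ p.2 ∉ X ∪ Y) ∨ (p.2 ∈ X ∪ Y ∧ p.1 ∉ X ∪ Y) then w p.1 p.2 else 0) +
        2 * ∑ p : V × V, E p := by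
      rw [Finset.mul_sum, ← Finset.sum_add_distrib, ← Finset.sum_add_distrib,
        ← Finset.sum_add_distrib]
      exact Finset.sum_congr rfl fun p _ => pair_key X Y p.1 p.2 (w p.1 p.2)
    unfold cutWeight
    linarith
  have hEnn : ∀ p ∈ Finset.univ (α := V × V), 0 ≤ E p := by
    intro p _
    simp only [hE]
    split <;> [exact hnn _ _; exact le_rfl]
  have hle1 : cutWeight w X ≤ cutWeight w (X ∩ Y) := hX.2 _ hIs
  have hle2 : cutWeight w Y ≤ cutWeight w (X ∪ Y) := hY.2 _ hUs
  have hEzero : ∑ p : V × V, E p = 0 := by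
    have h0 : (0 : ℝ) ≤ ∑ p : V × V, E p := Finset.sum_nonneg hEnn
    linarith
  have hall : ∀ p ∈ Finset.univ (α := V × V), E p = 0 :=
    (Finset.sum_eq_zero_iff_of_nonneg hEnn).mp hEzero
  have hz : ∀ i ∈ X \ Y, ∀ j ∈ Y \ X, w i j = 0 := by
    intro i hi j hj
    have h := hall (i, j) (Finset.mem_univ _)
    simp only [hE] at h
    rwa [if_pos (Or.inl ⟨hi, hj⟩)] at h
  refine ⟨?_, hz⟩
  funext p
  obtain ⟨i, j⟩ := p
  by_cases hw : 0 < w i j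
  · have hc1 : ¬ (i ∈ X \ Y ∧ j ∈ Y \ X) := by
      rintro ⟨h1, h2⟩
      exact absurd (hz i h1 j h2) (ne_of_gt hw)
    have hc2 : ¬ (j ∈ X \ Y ∧ i ∈ Y \ X) := by
      rintro ⟨h1, h2⟩
      have := hz j h1 i h2
      rw [hsym] at this
      exact absurd this (ne_of_gt hw)
    rw [Finset.mem_sdiff, Finset.mem_sdiff] at hc1 hc2
    clear hz hall hEzero hle1 hle2 hEnn hsum hE hX hY
    clear E
    simp only [Pi.add_apply, cutVec, Finset.mem_inter, Finset.mem_union]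
    by_cases ha : i ∈ X <;> by_cases hb : j ∈ X <;> by_cases hc : i ∈ Y <;>
      by_cases hd : j ∈ Y <;> simp [ha, hb, hc, hd, hw] <;> tauto
  · simp [cutVec, hw]
end

section
/- The cut dimension of the unweighted n-vertex cycle C_n for n ≥ 3 equals n: the characteristic vectors of the minimum cuts of C_n span ℝ^n. In particular, the vectors e₂+e_n, and e₁+e_k for 2 ≤ k ≤ n (standard basis vectors of ℝ^n) together span ℝ^n. -/
open Finset

namespace CutDimAux

variable (n : ℕ) [NeZero n]

/-- The unit weight function of the `n`-cycle. -/
noncomputable def cycw : ZMod n → ZMod n → ℝ :=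
  fun i j => if i ≠ j ∧ (j = i + 1 ∨ i = j + 1) then (1:ℝ) else 0

/-- The cut `Δ(X)` crosses the cycle edge `{i, i+1}`. -/
abbrev crossP (X : Finset (ZMod n)) (i : ZMod n) : Prop :=
  (i ∈ X ∧ i + 1 ∉ X) ∨ (i + 1 ∈ X ∧ i ∉ X)

omit [NeZero n] in
lemma two_ne (hn : 3 ≤ n) : ((2 : ℕ) : ZMod n) ≠ 0 := by
  rw [Ne, ZMod.natCast_eq_zero_iff]
  intro h
  exact absurd (Nat.le_of_dvd (by norm_num) h) (by omega)

omit [NeZero n] in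
lemma one_ne (hn : 3 ≤ n) : ((1 : ℕ) : ZMod n) ≠ 0 := by
  rw [Ne, ZMod.natCast_eq_zero_iff]
  intro h
  exact absurd (Nat.le_of_dvd (by norm_num) h) (by omega)

omit [NeZero n] in
lemma succ_ne (hn : 3 ≤ n) (i : ZMod n) : i + 1 ≠ i := by
  intro h
  exact one_ne n hn (by push_cast; linear_combination h)

omit [NeZero n] in
lemma succ_succ_ne (hn : 3 ≤ n) (i : ZMod n) : ¬ (i = i + 1 + 1) := by
  intro h
  exact two_ne n hn (by push_cast; linear_combination -h)

lemma cutWeight_cycle (hn : 3 ≤ n) (X : Finset (ZMod n)) :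
    cutWeight (cycw n) X = ∑ i : ZMod n, (if crossP n X i then (1:ℝ) else 0) := by
  have key : ∀ p : ZMod n × ZMod n,
      (if (p.1 ∈ X ∧ p.2 ∉ X) ∨ (p.2 ∈ X ∧ p.1 ∉ X) then cycw n p.1 p.2 else 0)
      = (if p.2 = p.1 + 1 then (if (p.1 ∈ X ∧ p.2 ∉ X) ∨ (p.2 ∈ X ∧ p.1 ∉ X) then (1:ℝ) else 0) else 0)
      + (if p.1 = p.2 + 1 then (if (p.1 ∈ X ∧ p.2 ∉ X) ∨ (p.2 ∈ X ∧ p.1 ∉ X) then (1:ℝ) else 0) else 0) := by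
    rintro ⟨i, j⟩
    dsimp only
    by_cases h1 : j = i + 1
    · subst h1
      have hA : i ≠ i + 1 := (succ_ne n hn i).symm
      have hB := succ_succ_ne n hn i
      simp [cycw, hA, hB]
    · by_cases h2 : i = j + 1
      · subst h2
        have hA : j + 1 ≠ j := succ_ne n hn j
        have hB := succ_succ_ne n hn j
        simp [cycw, hA, hB, h1]
      · simp [cycw, h1, h2]
  unfold cutWeight
  rw [Finset.sum_congr rfl (fun p _ => key p), Finset.sum_add_distrib]
  rw [Fintype.sum_prod_type]
  conv_lhs => rw [Fintype.sum_prod_type]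
  have s1 : ∑ i : ZMod n, ∑ j : ZMod n,
      (if j = i + 1 then (if (i ∈ X ∧ j ∉ X) ∨ (j ∈ X ∧ i ∉ X) then (1:ℝ) else 0) else 0)
      = ∑ i : ZMod n, (if crossP n X i then (1:ℝ) else 0) := by
    apply Finset.sum_congr rfl
    intro i _
    rw [Finset.sum_ite_eq' Finset.univ (i+1)
      (fun j => if (i ∈ X ∧ j ∉ X) ∨ (j ∈ X ∧ i ∉ X) then (1:ℝ) else 0)]
    simp [crossP]
  have s2 : ∑ i : ZMod n, ∑ j : ZMod n,
      (if i = j + 1 then (if (i ∈ X ∧ j ∉ X) ∨ (j ∈ X ∧ i ∉ X) then (1:ℝ) else 0) else 0)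
      = ∑ i : ZMod n, (if crossP n X i then (1:ℝ) else 0) := by
    rw [Finset.sum_comm]
    apply Finset.sum_congr rfl
    intro j _
    rw [Finset.sum_ite_eq' Finset.univ (j+1)
      (fun i => if (i ∈ X ∧ j ∉ X) ∨ (j ∈ X ∧ i ∉ X) then (1:ℝ) else 0)]
    simp only [Finset.mem_univ, if_true]
    exact if_congr or_comm rfl rfl
  rw [s1, s2]
  ring

lemma exists_cross (Y : Finset (ZMod n)) (hY : isCutShore Y) :
    ∃ i : ZMod n, crossP n Y i := by
  by_contra hc
  push_neg at hc
  have hconst : ∀ i : ZMod n, i ∈ Y ↔ i + 1 ∈ Y := by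
    intro i
    have : ¬ crossP n Y i := by intro hh; have := hc i; tauto
    simp only [crossP, not_or, not_and] at this
    constructor
    · intro h; by_contra h'; exact (this.1 h) h'
    · intro h; by_contra h'; exact (this.2 h) h'
  have hstep : ∀ k : ℕ, ∀ i : ZMod n, i ∈ Y → i + (k : ZMod n) ∈ Y := by
    intro k
    induction k with
    | zero => intro i hi; simpa using hi
    | succ m ih =>
      intro i hi
      have : i + ((m : ZMod n) + 1) = (i + m) + 1 := by ring
      push_cast
      rw [this]
      exact (hconst _).1 (ih i hi)
  obtain ⟨a, ha⟩ := hY.1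
  obtain ⟨b, hb⟩ : ∃ b : ZMod n, b ∉ Y := by
    by_contra h
    push_neg at h
    exact hY.2 (Finset.eq_univ_iff_forall.2 h)
  apply hb
  have := hstep (b - a).val a ha
  rwa [ZMod.natCast_rightInverse (b - a), add_sub_cancel] at this

lemma sum_cross_ge_two (Y : Finset (ZMod n)) (hY : isCutShore Y) :
    2 ≤ ∑ i : ZMod n, (if crossP n Y i then (1:ℝ) else 0) := by
  classical
  let up : ZMod n → ℝ := fun i => if i + 1 ∈ Y ∧ i ∉ Y then 1 else 0
  let down : ZMod n → ℝ := fun i => if i ∈ Y ∧ i + 1 ∉ Y then 1 else 0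
  have hupnn : ∀ i, 0 ≤ up i := fun i => by dsimp only [up]; positivity
  have hdownnn : ∀ i, 0 ≤ down i := fun i => by dsimp only [down]; positivity
  have hsplit : ∀ i, (if crossP n Y i then (1:ℝ) else 0) = down i + up i := by
    intro i
    dsimp only [up, down]
    by_cases h1 : i ∈ Y <;> by_cases h2 : i + 1 ∈ Y <;> simp [crossP, h1, h2]
  have hUD : ∑ i : ZMod n, up i = ∑ i : ZMod n, down i := by
    have h1 : ∀ i : ZMod n, up i - down i =
        (if i + 1 ∈ Y then (1:ℝ) else 0) - (if i ∈ Y then (1:ℝ) else 0) := by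
      intro i
      dsimp only [up, down]
      by_cases h1 : i ∈ Y <;> by_cases h2 : i + 1 ∈ Y <;> simp [h1, h2]
    have h2 : ∑ i : ZMod n, (if i + 1 ∈ Y then (1:ℝ) else 0)
        = ∑ i : ZMod n, (if i ∈ Y then (1:ℝ) else 0) :=
      Fintype.sum_equiv (Equiv.addRight (1 : ZMod n)) _ _ (fun i => rfl)
    have h3 : ∑ i : ZMod n, (up i - down i) = 0 := by
      rw [Finset.sum_congr rfl (fun i _ => h1 i), Finset.sum_sub_distrib, h2, sub_self]
    rw [Finset.sum_sub_distrib] at h3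
    linarith
  obtain ⟨i, hi⟩ := exists_cross n Y hY
  have hone : (1:ℝ) ≤ ∑ i : ZMod n, up i ∨ (1:ℝ) ≤ ∑ i : ZMod n, down i := by
    rcases hi with h | h
    · right
      have : down i = 1 := by dsimp only [down]; simp [h.1, h.2]
      calc (1:ℝ) = down i := this.symm
        _ ≤ _ := Finset.single_le_sum (fun j _ => hdownnn j) (Finset.mem_univ i)
    · left
      have : up i = 1 := by dsimp only [up]; simp [h.1, h.2]
      calc (1:ℝ) = up i := this.symm
        _ ≤ _ := Finset.single_le_sum (fun j _ => hupnn j) (Finset.mem_univ i)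
  rw [Finset.sum_congr rfl (fun i _ => hsplit i), Finset.sum_add_distrib]
  rcases hone with h | h <;> linarith

lemma val_eq_iff (m : ℕ) (hm : m < n) (i : ZMod n) : i = (m : ZMod n) ↔ i.val = m := by
  constructor
  · rintro rfl; exact ZMod.val_cast_of_lt hm
  · intro h; rw [← h, ZMod.natCast_rightInverse i]

lemma val_succ (i : ZMod n) : (i + 1).val = (i.val + 1 % n) % n := by
  rw [ZMod.val_add, ZMod.val_one_eq_one_mod]

lemma val_succ' (hn : 3 ≤ n) (i : ZMod n) :
    (i + 1).val = i.val + 1 ∧ i.val + 1 < n ∨ (i + 1).val = 0 ∧ i.val + 1 = n := by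
  have h := val_succ n i
  have h1n : 1 % n = 1 := Nat.mod_eq_of_lt (by omega)
  rw [h1n] at h
  have hvi : i.val < n := ZMod.val_lt i
  rcases Nat.lt_or_ge (i.val + 1) n with hlt | hge
  · left; rw [h, Nat.mod_eq_of_lt hlt]; exact ⟨rfl, hlt⟩
  · right
    have he : i.val + 1 = n := by omega
    exact ⟨by rw [h, he, Nat.mod_self], he⟩

/-- The arc `{1, …, k}` of the cycle. -/
def arcX (k : ℕ) : Finset (ZMod n) := Finset.univ.filter (fun i => 1 ≤ i.val ∧ i.val ≤ k)

/-- The arc `{0, 1}` of the cycle. -/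
def pairX : Finset (ZMod n) := Finset.univ.filter (fun i => i.val ≤ 1)

lemma shore_arcX (hn : 3 ≤ n) (k : ℕ) (hk1 : 1 ≤ k) :
    (arcX n k).Nonempty ∧ arcX n k ≠ Finset.univ := by
  constructor
  · refine ⟨(1 : ℕ), ?_⟩
    simp only [arcX, Finset.mem_filter, Finset.mem_univ, true_and]
    rw [ZMod.val_cast_of_lt (by omega)]
    omega
  · intro h
    have h0 : (0 : ZMod n) ∈ arcX n k := h ▸ Finset.mem_univ _
    simp only [arcX, Finset.mem_filter, ZMod.val_zero] at h0
    omega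

lemma cross_arcX (hn : 3 ≤ n) (k : ℕ) (hk1 : 1 ≤ k) (hk2 : k ≤ n - 1) (i : ZMod n) :
    crossP n (arcX n k) i ↔ (i = (0 : ZMod n) ∨ i = (k : ZMod n)) := by
  have hvi : i.val < n := ZMod.val_lt i
  have h0 : i = (0 : ZMod n) ↔ i.val = 0 := (ZMod.val_eq_zero i).symm
  have hk : i = (k : ZMod n) ↔ i.val = k := val_eq_iff n k (by omega) i
  simp only [crossP, arcX, Finset.mem_filter, Finset.mem_univ, true_and, h0, hk]
  rcases val_succ' n hn i with ⟨h, h'⟩ | ⟨h, h'⟩ <;> rw [h] <;> omega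

lemma shore_pairX (hn : 3 ≤ n) :
    (pairX n).Nonempty ∧ pairX n ≠ Finset.univ := by
  constructor
  · exact ⟨0, by simp [pairX]⟩
  · intro h
    have h0 : ((2:ℕ) : ZMod n) ∈ pairX n := h ▸ Finset.mem_univ _
    simp only [pairX, Finset.mem_filter, Finset.mem_univ, true_and] at h0
    rw [ZMod.val_cast_of_lt (by omega)] at h0
    omega

lemma cross_pairX (hn : 3 ≤ n) (i : ZMod n) :
    crossP n (pairX n) i ↔ (i = ((1:ℕ) : ZMod n) ∨ i = ((n-1 : ℕ) : ZMod n)) := by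
  have hvi : i.val < n := ZMod.val_lt i
  have ha : i = ((1:ℕ) : ZMod n) ↔ i.val = 1 := val_eq_iff n 1 (by omega) i
  have hb : i = ((n-1:ℕ) : ZMod n) ↔ i.val = n - 1 := val_eq_iff n (n-1) (by omega) i
  simp only [crossP, pairX, Finset.mem_filter, Finset.mem_univ, true_and, ha, hb]
  rcases val_succ' n hn i with ⟨h, h'⟩ | ⟨h, h'⟩ <;> rw [h] <;> omega

/-- Indicator vector of a point. -/
noncomputable def g (c : ZMod n) : ZMod n → ℝ := fun i => if i = c then 1 else 0

omit [NeZero n] in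
lemma ind_pair (a b : ZMod n) (hab : a ≠ b) (P : ZMod n → Prop) [DecidablePred P]
    (h : ∀ i, P i ↔ (i = a ∨ i = b)) :
    (fun i => if P i then (1:ℝ) else 0) = g n a + g n b := by
  funext i
  simp only [Pi.add_apply, g]
  by_cases h1 : i = a
  · subst h1; simp [(h i).2 (Or.inl rfl), hab]
  · by_cases h2 : i = b
    · subst h2; simp [(h i).2 (Or.inr rfl), h1]
    · have : ¬ P i := fun hp => by rcases (h i).1 hp with h' | h' <;> [exact h1 h'; exact h2 h']
      simp [this, h1, h2]

lemma sum_pair (a b : ZMod n) (hab : a ≠ b) (P : ZMod n → Prop) [DecidablePred P]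
    (h : ∀ i, P i ↔ (i = a ∨ i = b)) :
    ∑ i : ZMod n, (if P i then (1:ℝ) else 0) = 2 := by
  have key := ind_pair n a b hab P h
  calc ∑ i : ZMod n, (if P i then (1:ℝ) else 0) = ∑ i : ZMod n, (g n a + g n b) i := by
        rw [key]
    _ = ∑ i : ZMod n, ((if i = a then (1:ℝ) else 0) + (if i = b then (1:ℝ) else 0)) := rfl
    _ = 2 := by
        rw [Finset.sum_add_distrib,
          Finset.sum_ite_eq' Finset.univ a (fun _ => (1:ℝ)),
          Finset.sum_ite_eq' Finset.univ b (fun _ => (1:ℝ))]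
        simp
        norm_num

lemma isMinCut_arcX (hn : 3 ≤ n) (k : ℕ) (hk1 : 1 ≤ k) (hk2 : k ≤ n - 1) :
    isMinCut (cycw n) (arcX n k) := by
  refine ⟨shore_arcX n hn k hk1, fun Y hY => ?_⟩
  have hab : (0 : ZMod n) ≠ (k : ZMod n) := by
    intro h
    have := (val_eq_iff n k (by omega) 0).1 h
    rw [ZMod.val_zero] at this
    omega
  rw [cutWeight_cycle n hn, cutWeight_cycle n hn,
    sum_pair n 0 (k : ZMod n) hab _ (cross_arcX n hn k hk1 hk2)]
  exact sum_cross_ge_two n Y hY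

lemma isMinCut_pairX (hn : 3 ≤ n) : isMinCut (cycw n) (pairX n) := by
  refine ⟨shore_pairX n hn, fun Y hY => ?_⟩
  have hab : ((1:ℕ) : ZMod n) ≠ ((n-1 : ℕ) : ZMod n) := by
    intro h
    have := (val_eq_iff n (n-1) (by omega) _).1 h
    rw [ZMod.val_cast_of_lt (show 1 < n by omega)] at this
    omega
  rw [cutWeight_cycle n hn, cutWeight_cycle n hn,
    sum_pair n _ _ hab _ (cross_pairX n hn)]
  exact sum_cross_ge_two n Y hY

lemma cycw_edge (hn : 3 ≤ n) (i : ZMod n) : cycw n i (i + 1) = 1 := by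
  have : i ≠ i + 1 := (succ_ne n hn i).symm
  simp [cycw, this]

/-- The symmetric, cycle-supported subspace. -/
def W : Submodule ℝ (ZMod n × ZMod n → ℝ) where
  carrier := {v | ∀ i j : ZMod n, (¬(j = i + 1 ∨ i = j + 1) → v (i, j) = 0) ∧ v (i, j) = v (j, i)}
  add_mem' := by
    intro a b ha hb
    intro i j
    exact ⟨fun h => by simp [Pi.add_apply, (ha i j).1 h, (hb i j).1 h],
      by simp [Pi.add_apply, (ha i j).2, (hb i j).2]⟩
  zero_mem' := fun i j => ⟨fun _ => rfl, rfl⟩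
  smul_mem' := by
    intro c a ha
    intro i j
    exact ⟨fun h => by simp [Pi.smul_apply, (ha i j).1 h],
      by simp [Pi.smul_apply, (ha i j).2]⟩

lemma cutVec_mem_W (hn : 3 ≤ n) (X : Finset (ZMod n)) : cutVec (cycw n) X ∈ W n := by
  intro i j
  constructor
  · intro h
    have : cycw n i j = 0 := by simp [cycw, h]
    simp [cutVec, this]
  · have hc : cycw n i j = cycw n j i := by
      refine if_congr ?_ rfl rfl
      constructor
      · rintro ⟨a, b⟩; exact ⟨a.symm, b.symm⟩
      · rintro ⟨a, b⟩; exact ⟨a.symm, b.symm⟩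
    simp only [cutVec]
    refine if_congr ?_ rfl rfl
    rw [hc]
    constructor
    · rintro ⟨a, b⟩; exact ⟨a.symm, b⟩
    · rintro ⟨a, b⟩; exact ⟨a.symm, b⟩

/-- The edge-restriction linear map. -/
noncomputable def Phi : (ZMod n × ZMod n → ℝ) →ₗ[ℝ] (ZMod n → ℝ) :=
  LinearMap.funLeft ℝ ℝ (fun i : ZMod n => (i, i + 1))

lemma phi_cutVec (hn : 3 ≤ n) (X : Finset (ZMod n)) :
    Phi n (cutVec (cycw n) X) = fun i => if crossP n X i then (1:ℝ) else 0 := by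
  funext i
  show cutVec (cycw n) X (i, i + 1) = _
  simp only [cutVec, cycw_edge n hn i, crossP]
  norm_num

lemma phi_inj_on_W (v : ZMod n × ZMod n → ℝ) (hv : v ∈ W n) (h0 : Phi n v = 0) : v = 0 := by
  funext p
  rcases p with ⟨i, j⟩
  by_cases h : (j = i + 1 ∨ i = j + 1)
  · rcases h with h | h
    · subst h
      exact congrFun h0 i
    · subst h
      have := (hv j (j + 1)).2
      show v (j + 1, j) = 0
      rw [← this]
      exact congrFun h0 j
  · exact (hv i j).1 h

lemma main1 (hn : 3 ≤ n) :
    Module.finrank ℝ (Submodule.span ℝ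
      {v : ZMod n × ZMod n → ℝ | ∃ X : Finset (ZMod n),
        isMinCut (cycw n) X ∧ v = cutVec (cycw n) X}) = n := by
  classical
  set S := Submodule.span ℝ
      {v : ZMod n × ZMod n → ℝ | ∃ X : Finset (ZMod n),
        isMinCut (cycw n) X ∧ v = cutVec (cycw n) X} with hS
  have hSW : S ≤ W n := by
    rw [hS, Submodule.span_le]
    rintro v ⟨X, hX, rfl⟩
    exact cutVec_mem_W n hn X
  have hinj : Function.Injective ((Phi n).comp S.subtype) := by
    rw [← LinearMap.ker_eq_bot, eq_bot_iff]
    rintro ⟨x, hx⟩ h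
    have hx0 : Phi n x = 0 := h
    have : x = 0 := phi_inj_on_W n x (hSW hx) hx0
    rw [Submodule.mem_bot]
    exact Subtype.ext this
  have hfr : Module.finrank ℝ S = Module.finrank ℝ (S.map (Phi n)) := by
    have := (LinearEquiv.ofInjective ((Phi n).comp S.subtype) hinj).finrank_eq
    rwa [LinearMap.range_comp, Submodule.range_subtype] at this
  -- membership of the generators' images
  have hu : ∀ k : ℕ, 1 ≤ k → k ≤ n - 1 → g n 0 + g n (k : ZMod n) ∈ S.map (Phi n) := by
    intro k hk1 hk2
    have hmem : cutVec (cycw n) (arcX n k) ∈ S :=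
      Submodule.subset_span ⟨arcX n k, isMinCut_arcX n hn k hk1 hk2, rfl⟩
    have hab : (0 : ZMod n) ≠ (k : ZMod n) := by
      intro h
      have := (val_eq_iff n k (by omega) 0).1 h
      rw [ZMod.val_zero] at this
      omega
    have himg : Phi n (cutVec (cycw n) (arcX n k)) = g n 0 + g n (k : ZMod n) := by
      rw [phi_cutVec n hn]
      exact ind_pair n _ _ hab _ (cross_arcX n hn k hk1 hk2)
    exact himg ▸ Submodule.mem_map_of_mem hmem
  have hv : g n ((1:ℕ) : ZMod n) + g n ((n-1:ℕ) : ZMod n) ∈ S.map (Phi n) := by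
    have hmem : cutVec (cycw n) (pairX n) ∈ S :=
      Submodule.subset_span ⟨pairX n, isMinCut_pairX n hn, rfl⟩
    have hab : ((1:ℕ) : ZMod n) ≠ ((n-1 : ℕ) : ZMod n) := by
      intro h
      have := (val_eq_iff n (n-1) (by omega) _).1 h
      rw [ZMod.val_cast_of_lt (show 1 < n by omega)] at this
      omega
    have himg : Phi n (cutVec (cycw n) (pairX n))
        = g n ((1:ℕ) : ZMod n) + g n ((n-1:ℕ) : ZMod n) := by
      rw [phi_cutVec n hn]
      exact ind_pair n _ _ hab _ (cross_pairX n hn)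
    exact himg ▸ Submodule.mem_map_of_mem hmem
  have he0 : g n 0 ∈ S.map (Phi n) := by
    have hid : g n 0 = ((1:ℝ)/2) • ((g n 0 + g n ((1:ℕ) : ZMod n))
        + (g n 0 + g n ((n-1:ℕ) : ZMod n))
        - (g n ((1:ℕ) : ZMod n) + g n ((n-1:ℕ) : ZMod n))) := by
      module
    rw [hid]
    exact Submodule.smul_mem _ _ (Submodule.sub_mem _
      (Submodule.add_mem _ (hu 1 le_rfl (by omega)) (hu (n-1) (by omega) le_rfl)) hv)
  have hall : ∀ a : ZMod n, g n a ∈ S.map (Phi n) := by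
    intro a
    by_cases ha : a = 0
    · subst ha; exact he0
    · have hv1 : 1 ≤ a.val := by
        rcases Nat.eq_zero_or_pos a.val with h | h
        · exact absurd ((ZMod.val_eq_zero a).1 h) ha
        · exact h
      have hv2 : a.val ≤ n - 1 := by
        have := ZMod.val_lt a
        omega
      have hcast : ((a.val : ℕ) : ZMod n) = a := ZMod.natCast_rightInverse a
      have := hu a.val hv1 hv2
      rw [hcast] at this
      have hid : g n a = (g n 0 + g n a) - g n 0 := by module
      rw [hid]
      exact Submodule.sub_mem _ this he0
  have hmap : S.map (Phi n) = ⊤ := by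
    rw [eq_top_iff, ← (Pi.basisFun ℝ (ZMod n)).span_eq]
    refine Submodule.span_le.2 ?_
    rintro _ ⟨a, rfl⟩
    have : (Pi.basisFun ℝ (ZMod n)) a = g n a := by
      funext i
      simp [Pi.basisFun_apply, Pi.single_apply, g]
    rw [this]
    exact hall a
  rw [hfr, hmap, finrank_top, Module.finrank_fintype_fun_eq_card, ZMod.card]

end CutDimAux

/-- The cut dimension of the unit-weight `n`-cycle (`n ≥ 3`) equals `n`. -/
theorem stmt5 (n : ℕ) (hn : 3 ≤ n) [NeZero n] :
    Module.finrank ℝ (Submodule.span ℝ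
      {v : ZMod n × ZMod n → ℝ | ∃ X : Finset (ZMod n),
        isMinCut (fun i j => if i ≠ j ∧ (j = i + 1 ∨ i = j + 1) then (1:ℝ) else 0) X ∧
        v = cutVec (fun i j => if i ≠ j ∧ (j = i + 1 ∨ i = j + 1) then (1:ℝ) else 0) X}) = n
    ∧ Submodule.span ℝ
        ({(fun i : Fin n => if i = (⟨1, by omega⟩ : Fin n) then (1:ℝ) else 0) +
            (fun i : Fin n => if i = (⟨n - 1, by omega⟩ : Fin n) then (1:ℝ) else 0)} ∪
          {v : Fin n → ℝ | ∃ k : Fin n, 1 ≤ (k : ℕ) ∧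
            v = (fun i : Fin n => if i = (⟨0, by omega⟩ : Fin n) then (1:ℝ) else 0) +
              (fun i : Fin n => if i = k then (1:ℝ) else 0)}) = ⊤ := by
  constructor
  · exact CutDimAux.main1 n hn
  · have h3 : 3 ≤ n := hn
    set f : Fin n → (Fin n → ℝ) := fun j i => if i = j then (1:ℝ) else 0 with hfdef
    set A := ({f ⟨1, by omega⟩ + f ⟨n-1, by omega⟩} ∪
            {v : Fin n → ℝ | ∃ k : Fin n, 1 ≤ (k : ℕ) ∧ v = f ⟨0, by omega⟩ + f k}) with hA
    have hmem : ∀ k : Fin n, 1 ≤ (k:ℕ) → f ⟨0, by omega⟩ + f k ∈ A := fun k hk =>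
      Or.inr ⟨k, hk, rfl⟩
    have h1 : f ⟨0, by omega⟩ + f ⟨1, by omega⟩ ∈ A := hmem _ (by simp)
    have h2 : f ⟨0, by omega⟩ + f ⟨n-1, by omega⟩ ∈ A := hmem _ (by simp; omega)
    have h3' : f ⟨1, by omega⟩ + f ⟨n-1, by omega⟩ ∈ A := Or.inl rfl
    have he0 : f ⟨0, by omega⟩ ∈ Submodule.span ℝ A := by
      have : f ⟨0, by omega⟩ = ((1:ℝ)/2) • ((f ⟨0, by omega⟩ + f ⟨1, by omega⟩) +
          (f ⟨0, by omega⟩ + f ⟨n-1, by omega⟩) - (f ⟨1, by omega⟩ + f ⟨n-1, by omega⟩)) := by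
        module
      rw [this]
      exact Submodule.smul_mem _ _ (Submodule.sub_mem _
        (Submodule.add_mem _ (Submodule.subset_span h1) (Submodule.subset_span h2))
        (Submodule.subset_span h3'))
    have hall : ∀ j : Fin n, f j ∈ Submodule.span ℝ A := by
      intro j
      rcases Nat.eq_zero_or_pos (j:ℕ) with h | h
      · have : j = ⟨0, by omega⟩ := Fin.ext h
        rw [this]; exact he0
      · have : f j = (f ⟨0, by omega⟩ + f j) - f ⟨0, by omega⟩ := by module
        rw [this]
        exact Submodule.sub_mem _ (Submodule.subset_span (hmem j h)) he0
    rw [eq_top_iff, ← (Pi.basisFun ℝ (Fin n)).span_eq]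
    refine Submodule.span_le.2 ?_
    rintro _ ⟨j, rfl⟩
    have : (Pi.basisFun ℝ (Fin n)) j = f j := by
      funext i
      simp [Pi.basisFun_apply, Pi.single_apply, hfdef]
    rw [this]; exact hall j
end

section
/- Let G be the direct union of graphs G₀ and G₁ at vertices v₀ ∈ V₀ and v₁ ∈ V₁ (identifying v₀ and v₁), and let c_b be the minimum cut weight of G_b for b = 0,1. If c₀ = c₁ then cdim(G) = cdim(G₀) + cdim(G₁), and if c_b < c_{1-b} then cdim(G) = cdim(G_b). -/
open Finset

/-- The cut dimension of a weighted graph. -/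
noncomputable def cdim {V : Type*} [DecidableEq V] [Fintype V] (w : V → V → ℝ) : ℕ :=
  Module.finrank ℝ (Submodule.span ℝ
    {v : V × V → ℝ | ∃ X : Finset V, isMinCut w X ∧ v = cutVec w X})

/-- The vertex set of the direct union of `G₀` and `G₁` at `v₀, v₁`:
the two special vertices are identified to the single new vertex `none`. -/
abbrev duVertex (V₀ V₁ : Type*) (v₀ : V₀) (v₁ : V₁) :=
  Option ({x : V₀ // x ≠ v₀} ⊕ {y : V₁ // y ≠ v₁})

/-- The weight function of the direct union of `(V₀, w₀)` and `(V₁, w₁)` at `v₀, v₁`. -/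
def duWeight {V₀ V₁ : Type*} (w₀ : V₀ → V₀ → ℝ) (w₁ : V₁ → V₁ → ℝ) (v₀ : V₀) (v₁ : V₁) :
    duVertex V₀ V₁ v₀ v₁ → duVertex V₀ V₁ v₀ v₁ → ℝ
  | none, none => 0
  | none, some (Sum.inl x) => w₀ v₀ x.1
  | none, some (Sum.inr y) => w₁ v₁ y.1
  | some (Sum.inl x), none => w₀ x.1 v₀
  | some (Sum.inr y), none => w₁ y.1 v₁
  | some (Sum.inl x), some (Sum.inl x') => w₀ x.1 x'.1
  | some (Sum.inr y), some (Sum.inr y') => w₁ y.1 y'.1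
  | some (Sum.inl _), some (Sum.inr _) => 0
  | some (Sum.inr _), some (Sum.inl _) => 0


set_option linter.unusedSectionVars false

section Generic
variable {V : Type*} [DecidableEq V] [Fintype V] (w : V → V → ℝ)

lemma cutWeight_nonneg (hnn : ∀ i j, 0 ≤ w i j) (X : Finset V) : 0 ≤ cutWeight w X := by
  unfold cutWeight
  have : ∀ p : V × V, (0:ℝ) ≤ if (p.1 ∈ X ∧ p.2 ∉ X) ∨ (p.2 ∈ X ∧ p.1 ∉ X) then w p.1 p.2 else 0 := by
    intro p; split
    · exact hnn _ _
    · exact le_refl 0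
  have h2 : (0:ℝ) ≤ ∑ p : V × V, if (p.1 ∈ X ∧ p.2 ∉ X) ∨ (p.2 ∈ X ∧ p.1 ∉ X) then w p.1 p.2 else 0 :=
    Finset.sum_nonneg fun p _ => this p
  linarith

lemma cutWeight_compl (X : Finset V) : cutWeight w Xᶜ = cutWeight w X := by
  unfold cutWeight
  congr 1
  apply Finset.sum_congr rfl
  intro p _
  congr 1
  simp only [Finset.mem_compl, eq_iff_iff]
  tauto

lemma cutVec_compl (X : Finset V) : cutVec w Xᶜ = cutVec w X := by
  funext p
  unfold cutVec
  congr 1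
  simp only [Finset.mem_compl, eq_iff_iff]
  tauto

lemma cutWeight_empty : cutWeight w (∅ : Finset V) = 0 := by
  unfold cutWeight
  simp

lemma cutVec_empty : cutVec w (∅ : Finset V) = 0 := by
  funext p; unfold cutVec; simp

lemma cutVec_diag_eq_zero (X : Finset V) (a : V) : cutVec w X (a, a) = 0 := by
  unfold cutVec
  rw [if_neg]
  rintro ⟨h1 | h1, _⟩ <;> exact h1.2 h1.1

lemma isMinCut_iff {c : ℝ} (hc : IsLeast {c | ∃ X : Finset V, isCutShore X ∧ cutWeight w X = c} c)
    (X : Finset V) : isMinCut w X ↔ isCutShore X ∧ cutWeight w X = c := by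
  obtain ⟨⟨W, hW, hWc⟩, hlb⟩ := hc
  constructor
  · rintro ⟨hsh, hmin⟩
    refine ⟨hsh, le_antisymm (hWc ▸ hmin W hW) (hlb ⟨X, hsh, rfl⟩)⟩
  · rintro ⟨hsh, hXc⟩
    exact ⟨hsh, fun Y hY => hXc ▸ hlb ⟨Y, hY, rfl⟩⟩

end Generic

section Generic2
variable {V : Type*} [DecidableEq V] [Fintype V] (w : V → V → ℝ)
lemma least_cutWeight_nonneg (hnn : ∀ i j, 0 ≤ w i j) {c : ℝ}
    (hc : IsLeast {c | ∃ X : Finset V, isCutShore X ∧ cutWeight w X = c} c) : 0 ≤ c := by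
  obtain ⟨X, -, hXw⟩ := hc.1
  exact hXw ▸ cutWeight_nonneg w hnn X

lemma isMinCut_compl {X : Finset V} (h : isMinCut w X) : isMinCut w Xᶜ := by
  obtain ⟨⟨hne, hnu⟩, hmin⟩ := h
  refine ⟨⟨?_, ?_⟩, fun Y hY => (cutWeight_compl w X) ▸ hmin Y hY⟩
  · exact (Finset.compl_ne_univ_iff_nonempty Xᶜ).mp (by simpa using hnu)
  · exact (Finset.compl_ne_univ_iff_nonempty X).mpr hne

end Generic2

section DU

variable {V₀ V₁ : Type*} [DecidableEq V₀] [Fintype V₀] [DecidableEq V₁] [Fintype V₁]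

def emb0 (v₀ : V₀) (v₁ : V₁) (x : V₀) : duVertex V₀ V₁ v₀ v₁ :=
  if h : x = v₀ then none else some (Sum.inl ⟨x, h⟩)

def emb1 (v₀ : V₀) (v₁ : V₁) (y : V₁) : duVertex V₀ V₁ v₀ v₁ :=
  if h : y = v₁ then none else some (Sum.inr ⟨y, h⟩)

def ret0 (v₀ : V₀) (v₁ : V₁) : duVertex V₀ V₁ v₀ v₁ → Option V₀
  | none => some v₀
  | some (Sum.inl x) => some x.1
  | some (Sum.inr _) => none

def ret1 (v₀ : V₀) (v₁ : V₁) : duVertex V₀ V₁ v₀ v₁ → Option V₁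
  | none => some v₁
  | some (Sum.inl _) => none
  | some (Sum.inr y) => some y.1

variable (v₀ : V₀) (v₁ : V₁)

@[simp] lemma emb0_self : emb0 v₀ v₁ v₀ = none := by simp [emb0]

lemma emb0_ne (x : V₀) (h : x ≠ v₀) : emb0 v₀ v₁ x = some (Sum.inl ⟨x, h⟩) := by
  simp [emb0, h]

@[simp] lemma emb0_inl (x : {x : V₀ // x ≠ v₀}) : emb0 v₀ v₁ x.1 = some (Sum.inl x) := by
  simp [emb0, x.2]

@[simp] lemma emb1_self : emb1 v₀ v₁ v₁ = none := by simp [emb1]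

@[simp] lemma emb1_inr (y : {y : V₁ // y ≠ v₁}) : emb1 v₀ v₁ y.1 = some (Sum.inr y) := by
  simp [emb1, y.2]

@[simp] lemma ret0_emb0 (x : V₀) : ret0 v₀ v₁ (emb0 v₀ v₁ x) = some x := by
  by_cases h : x = v₀ <;> simp [emb0, h, ret0]

@[simp] lemma ret1_emb1 (y : V₁) : ret1 v₀ v₁ (emb1 v₀ v₁ y) = some y := by
  by_cases h : y = v₁ <;> simp [emb1, h, ret1]

lemma emb0_injective : Function.Injective (emb0 v₀ v₁) := by
  intro a b h
  have := congrArg (ret0 v₀ v₁) h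
  simpa using this

lemma emb1_injective : Function.Injective (emb1 v₀ v₁) := by
  intro a b h
  have := congrArg (ret1 v₀ v₁) h
  simpa using this

lemma emb0_eq_none_iff (x : V₀) : emb0 v₀ v₁ x = none ↔ x = v₀ := by
  by_cases h : x = v₀ <;> simp [emb0, h]

lemma emb1_eq_none_iff (y : V₁) : emb1 v₀ v₁ y = none ↔ y = v₁ := by
  by_cases h : y = v₁ <;> simp [emb1, h]

/-- summing over the direct-union vertex set, side-0 presentation -/
lemma sum_du0 (g : duVertex V₀ V₁ v₀ v₁ → ℝ) :
    ∑ p, g p = ∑ a : V₀, g (emb0 v₀ v₁ a) + ∑ y : {y : V₁ // y ≠ v₁}, g (some (Sum.inr y)) := by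
  rw [Fintype.sum_option, Fintype.sum_sum_type]
  have : ∑ a : V₀, g (emb0 v₀ v₁ a)
      = ∑ o : Option {x : V₀ // x ≠ v₀}, g (emb0 v₀ v₁ (Equiv.optionSubtypeNe v₀ o)) := by
    rw [Equiv.sum_comp (Equiv.optionSubtypeNe v₀) (fun a => g (emb0 v₀ v₁ a))]
  rw [this, Fintype.sum_option]
  simp only [Equiv.optionSubtypeNe_none, Equiv.optionSubtypeNe_some, emb0_self, emb0_inl]
  ring

lemma sum_du1 (g : duVertex V₀ V₁ v₀ v₁ → ℝ) :
    ∑ p, g p = ∑ b : V₁, g (emb1 v₀ v₁ b) + ∑ x : {x : V₀ // x ≠ v₀}, g (some (Sum.inl x)) := by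
  rw [Fintype.sum_option, Fintype.sum_sum_type]
  have : ∑ b : V₁, g (emb1 v₀ v₁ b)
      = ∑ o : Option {y : V₁ // y ≠ v₁}, g (emb1 v₀ v₁ (Equiv.optionSubtypeNe v₁ o)) := by
    rw [Equiv.sum_comp (Equiv.optionSubtypeNe v₁) (fun b => g (emb1 v₀ v₁ b))]
  rw [this, Fintype.sum_option]
  simp only [Equiv.optionSubtypeNe_none, Equiv.optionSubtypeNe_some, emb1_self, emb1_inr]
  ring

/-- auxiliary pullback on options -/
def optPull {V₀ : Type*} (f : V₀ × V₀ → ℝ) : Option V₀ → Option V₀ → ℝ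
  | some a, some b => f (a, b)
  | none, _ => 0
  | some _, none => 0

lemma optPull_add {W : Type*} (f g : W × W → ℝ) (o1 o2 : Option W) :
    optPull (f + g) o1 o2 = optPull f o1 o2 + optPull g o1 o2 := by
  rcases o1 with _ | a <;> rcases o2 with _ | b <;> simp [optPull]

lemma optPull_smul {W : Type*} (c : ℝ) (f : W × W → ℝ) (o1 o2 : Option W) :
    optPull (c • f) o1 o2 = c * optPull f o1 o2 := by
  rcases o1 with _ | a <;> rcases o2 with _ | b <;> simp [optPull]

/-- The linear pullback map embedding side-0 cut vectors into the direct union. -/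
def Phi0 : (V₀ × V₀ → ℝ) →ₗ[ℝ] (duVertex V₀ V₁ v₀ v₁ × duVertex V₀ V₁ v₀ v₁ → ℝ) where
  toFun f p := optPull f (ret0 v₀ v₁ p.1) (ret0 v₀ v₁ p.2)
  map_add' f g := by funext p; exact optPull_add f g _ _
  map_smul' c f := by funext p; exact optPull_smul c f _ _

def Phi1 : (V₁ × V₁ → ℝ) →ₗ[ℝ] (duVertex V₀ V₁ v₀ v₁ × duVertex V₀ V₁ v₀ v₁ → ℝ) where
  toFun f p := optPull f (ret1 v₀ v₁ p.1) (ret1 v₀ v₁ p.2)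
  map_add' f g := by funext p; exact optPull_add f g _ _
  map_smul' c f := by funext p; exact optPull_smul c f _ _

lemma Phi0_apply (f : V₀ × V₀ → ℝ) (p) :
    Phi0 v₀ v₁ f p = optPull f (ret0 v₀ v₁ p.1) (ret0 v₀ v₁ p.2) := rfl

lemma Phi1_apply (f : V₁ × V₁ → ℝ) (p) :
    Phi1 v₀ v₁ f p = optPull f (ret1 v₀ v₁ p.1) (ret1 v₀ v₁ p.2) := rfl

lemma Phi0_emb (f : V₀ × V₀ → ℝ) (a b : V₀) :
    Phi0 v₀ v₁ f (emb0 v₀ v₁ a, emb0 v₀ v₁ b) = f (a, b) := by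
  rw [Phi0_apply]; simp [optPull]

lemma Phi1_emb (f : V₁ × V₁ → ℝ) (a b : V₁) :
    Phi1 v₀ v₁ f (emb1 v₀ v₁ a, emb1 v₀ v₁ b) = f (a, b) := by
  rw [Phi1_apply]; simp [optPull]

lemma Phi0_injective : Function.Injective (Phi0 (V₁ := V₁) v₀ v₁) := by
  intro f g h
  funext p
  obtain ⟨a, b⟩ := p
  have := congrFun h (emb0 v₀ v₁ a, emb0 v₀ v₁ b)
  rwa [Phi0_emb, Phi0_emb] at this

lemma Phi1_injective : Function.Injective (Phi1 (V₀ := V₀) v₀ v₁) := by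
  intro f g h
  funext p
  obtain ⟨a, b⟩ := p
  have := congrFun h (emb1 v₀ v₁ a, emb1 v₀ v₁ b)
  rwa [Phi1_emb, Phi1_emb] at this

/-- side-0 part of a shore in the direct union -/
def partA (Y : Finset (duVertex V₀ V₁ v₀ v₁)) : Finset V₀ :=
  univ.filter (fun a => emb0 v₀ v₁ a ∈ Y)

def partB (Y : Finset (duVertex V₀ V₁ v₀ v₁)) : Finset V₁ :=
  univ.filter (fun b => emb1 v₀ v₁ b ∈ Y)

lemma mem_partA (Y : Finset (duVertex V₀ V₁ v₀ v₁)) (a : V₀) :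
    a ∈ partA v₀ v₁ Y ↔ emb0 v₀ v₁ a ∈ Y := by simp [partA]

lemma mem_partB (Y : Finset (duVertex V₀ V₁ v₀ v₁)) (b : V₁) :
    b ∈ partB v₀ v₁ Y ↔ emb1 v₀ v₁ b ∈ Y := by simp [partB]

lemma sum_split {α : Type*} [Fintype α] [DecidableEq α] (a : α) (g : α → ℝ) :
    ∑ x, g x = g a + ∑ b : {b : α // b ≠ a}, g b.1 := by
  rw [← Equiv.sum_comp (Equiv.optionSubtypeNe a) g, Fintype.sum_option]
  simp

variable (w₀ : V₀ → V₀ → ℝ) (w₁ : V₁ → V₁ → ℝ)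

lemma duWeight_emb0 (a b : V₀) (hab : a ≠ b) :
    duWeight w₀ w₁ v₀ v₁ (emb0 v₀ v₁ a) (emb0 v₀ v₁ b) = w₀ a b := by
  by_cases ha : a = v₀ <;> by_cases hb : b = v₀
  · exact absurd (ha.trans hb.symm) hab
  · subst ha; rw [emb0_self, emb0_ne _ _ b hb]; rfl
  · subst hb; rw [emb0_self, emb0_ne _ _ a ha]; rfl
  · rw [emb0_ne _ _ a ha, emb0_ne _ _ b hb]; rfl

lemma duWeight_emb1 (a b : V₁) (hab : a ≠ b) :
    duWeight w₀ w₁ v₀ v₁ (emb1 v₀ v₁ a) (emb1 v₀ v₁ b) = w₁ a b := by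
  by_cases ha : a = v₁ <;> by_cases hb : b = v₁
  · exact absurd (ha.trans hb.symm) hab
  · subst ha; rw [emb1_self]; simp only [emb1, hb, dite_false]; rfl
  · subst hb; rw [emb1_self]; simp only [emb1, ha, dite_false]; rfl
  · simp only [emb1, ha, hb, dite_false]; rfl

lemma cutWeight_decomp (Y : Finset (duVertex V₀ V₁ v₀ v₁)) (hY : none ∉ Y) :
    cutWeight (duWeight w₀ w₁ v₀ v₁) Y
      = cutWeight w₀ (partA v₀ v₁ Y) + cutWeight w₁ (partB v₀ v₁ Y) := by
  classical
  set A := partA v₀ v₁ Y with hA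
  set B := partB v₀ v₁ Y with hB
  set F : duVertex V₀ V₁ v₀ v₁ → duVertex V₀ V₁ v₀ v₁ → ℝ := fun p q =>
    if (p ∈ Y ∧ q ∉ Y) ∨ (q ∈ Y ∧ p ∉ Y) then duWeight w₀ w₁ v₀ v₁ p q else 0 with hF
  set F₀ : V₀ → V₀ → ℝ := fun a b =>
    if (a ∈ A ∧ b ∉ A) ∨ (b ∈ A ∧ a ∉ A) then w₀ a b else 0 with hF0
  set F₁ : V₁ → V₁ → ℝ := fun c d =>
    if (c ∈ B ∧ d ∉ B) ∨ (d ∈ B ∧ c ∉ B) then w₁ c d else 0 with hF1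
  have memA : ∀ a, a ∈ A ↔ emb0 v₀ v₁ a ∈ Y := fun a => mem_partA v₀ v₁ Y a
  have memB : ∀ b, b ∈ B ↔ emb1 v₀ v₁ b ∈ Y := fun b => mem_partB v₀ v₁ Y b
  have memB' : ∀ y : {y : V₁ // y ≠ v₁}, y.1 ∈ B ↔ some (Sum.inr y) ∈ Y := by
    intro y; rw [memB, emb1_inr]
  have hv₁B : v₁ ∉ B := by rw [memB, emb1_self]; exact hY
  have h1 : ∀ a b : V₀, F (emb0 v₀ v₁ a) (emb0 v₀ v₁ b) = F₀ a b := by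
    intro a b
    by_cases hc : (a ∈ A ∧ b ∉ A) ∨ (b ∈ A ∧ a ∉ A)
    · have hab : a ≠ b := by rintro rfl; tauto
      have hc' : (emb0 v₀ v₁ a ∈ Y ∧ emb0 v₀ v₁ b ∉ Y) ∨
          (emb0 v₀ v₁ b ∈ Y ∧ emb0 v₀ v₁ a ∉ Y) := by
        rw [← memA, ← memA]; exact hc
      simp only [hF, hF0]
      rw [if_pos hc, if_pos hc']
      exact duWeight_emb0 v₀ v₁ w₀ w₁ a b hab
    · have hc' : ¬ ((emb0 v₀ v₁ a ∈ Y ∧ emb0 v₀ v₁ b ∉ Y) ∨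
          (emb0 v₀ v₁ b ∈ Y ∧ emb0 v₀ v₁ a ∉ Y)) := by
        rw [← memA, ← memA]; exact hc
      simp only [hF, hF0]
      rw [if_neg hc, if_neg hc']
  have h2 : ∀ y : {y : V₁ // y ≠ v₁}, F none (some (Sum.inr y)) = F₁ v₁ y.1 := by
    intro y
    simp only [hF, hF1]
    have cond_iff : ((none ∈ Y ∧ some (Sum.inr y) ∉ Y) ∨ (some (Sum.inr y) ∈ Y ∧ none ∉ Y))
        ↔ ((v₁ ∈ B ∧ y.1 ∉ B) ∨ (y.1 ∈ B ∧ v₁ ∉ B)) := by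
      constructor
      · rintro (⟨h, -⟩ | ⟨h, -⟩)
        · exact absurd h hY
        · exact Or.inr ⟨(memB' y).mpr h, hv₁B⟩
      · rintro (⟨h, -⟩ | ⟨h, -⟩)
        · exact absurd h hv₁B
        · exact Or.inr ⟨(memB' y).mp h, hY⟩
    exact if_congr cond_iff rfl rfl
  have h2' : ∀ y : {y : V₁ // y ≠ v₁}, F (some (Sum.inr y)) none = F₁ y.1 v₁ := by
    intro y
    simp only [hF, hF1]
    have cond_iff : ((some (Sum.inr y) ∈ Y ∧ none ∉ Y) ∨ (none ∈ Y ∧ some (Sum.inr y) ∉ Y))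
        ↔ ((y.1 ∈ B ∧ v₁ ∉ B) ∨ (v₁ ∈ B ∧ y.1 ∉ B)) := by
      constructor
      · rintro (⟨h, -⟩ | ⟨h, -⟩)
        · exact Or.inl ⟨(memB' y).mpr h, hv₁B⟩
        · exact absurd h hY
      · rintro (⟨h, -⟩ | ⟨h, -⟩)
        · exact Or.inl ⟨(memB' y).mp h, hY⟩
        · exact absurd h hv₁B
    exact if_congr cond_iff rfl rfl
  have h3 : ∀ (x : {x : V₀ // x ≠ v₀}) (y : {y : V₁ // y ≠ v₁}),
      F (some (Sum.inl x)) (some (Sum.inr y)) = 0 := by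
    intro x y
    simp only [hF]
    have e1 : duWeight w₀ w₁ v₀ v₁ (some (Sum.inl x)) (some (Sum.inr y)) = 0 := rfl
    rw [e1, ite_self]
  have h3' : ∀ (y : {y : V₁ // y ≠ v₁}) (x : {x : V₀ // x ≠ v₀}),
      F (some (Sum.inr y)) (some (Sum.inl x)) = 0 := by
    intro y x
    simp only [hF]
    have e1 : duWeight w₀ w₁ v₀ v₁ (some (Sum.inr y)) (some (Sum.inl x)) = 0 := rfl
    rw [e1, ite_self]
  have h4 : ∀ y y' : {y : V₁ // y ≠ v₁},
      F (some (Sum.inr y)) (some (Sum.inr y')) = F₁ y.1 y'.1 := by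
    intro y y'
    simp only [hF, hF1]
    exact if_congr (by rw [memB' y, memB' y']) rfl rfl
  have h5 : F₁ v₁ v₁ = 0 := by simp only [hF1]; simp
  have hL : ∑ p : duVertex V₀ V₁ v₀ v₁ × duVertex V₀ V₁ v₀ v₁, F p.1 p.2
      = (∑ a : V₀, ∑ b : V₀, F₀ a b)
        + ((∑ y : {y : V₁ // y ≠ v₁}, F₁ v₁ y.1) + (∑ y : {y : V₁ // y ≠ v₁}, F₁ y.1 v₁)
        + ∑ y : {y : V₁ // y ≠ v₁}, ∑ y' : {y : V₁ // y ≠ v₁}, F₁ y.1 y'.1) := by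
    rw [Fintype.sum_prod_type]
    rw [sum_du0 v₀ v₁ (fun p => ∑ q, F p q)]
    have i1 : ∀ a : V₀, ∑ q, F (emb0 v₀ v₁ a) q
        = ∑ b : V₀, F₀ a b + ∑ y : {y : V₁ // y ≠ v₁}, F (emb0 v₀ v₁ a) (some (Sum.inr y)) := by
      intro a
      rw [sum_du0 v₀ v₁ (fun q => F (emb0 v₀ v₁ a) q)]
      congr 1
      exact Finset.sum_congr rfl fun b _ => h1 a b
    have i2 : ∀ y : {y : V₁ // y ≠ v₁}, ∑ q, F (some (Sum.inr y)) q
        = F₁ y.1 v₁ + ∑ y' : {y : V₁ // y ≠ v₁}, F₁ y.1 y'.1 := by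
      intro y
      rw [sum_du0 v₀ v₁ (fun q => F (some (Sum.inr y)) q)]
      congr 1
      · rw [sum_split v₀ (fun a => F (some (Sum.inr y)) (emb0 v₀ v₁ a))]
        simp only [emb0_self, emb0_inl]
        rw [h2' y]
        have : ∀ x : {x : V₀ // x ≠ v₀}, F (some (Sum.inr y)) (some (Sum.inl x)) = 0 :=
          fun x => h3' y x
        simp [this]
      · exact Finset.sum_congr rfl fun y' _ => h4 y y'
    rw [Finset.sum_congr rfl (fun a _ => i1 a), Finset.sum_congr rfl (fun y _ => i2 y)]
    rw [Finset.sum_add_distrib, Finset.sum_add_distrib]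
    have i3 : ∑ a : V₀, ∑ y : {y : V₁ // y ≠ v₁}, F (emb0 v₀ v₁ a) (some (Sum.inr y))
        = ∑ y : {y : V₁ // y ≠ v₁}, F₁ v₁ y.1 := by
      rw [sum_split v₀ (fun a => ∑ y : {y : V₁ // y ≠ v₁}, F (emb0 v₀ v₁ a) (some (Sum.inr y)))]
      simp only [emb0_self, emb0_inl]
      have : ∀ x : {x : V₀ // x ≠ v₀},
          ∑ y : {y : V₁ // y ≠ v₁}, F (some (Sum.inl x)) (some (Sum.inr y)) = 0 :=
        fun x => Finset.sum_eq_zero fun y _ => h3 x y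
      rw [Finset.sum_congr rfl (fun x _ => this x)]
      rw [Finset.sum_congr rfl (fun y _ => h2 y)]
      simp
    rw [i3]
    ring
  have hR1 : ∑ p : V₁ × V₁, F₁ p.1 p.2
      = F₁ v₁ v₁ + (∑ y : {y : V₁ // y ≠ v₁}, F₁ v₁ y.1) + (∑ y : {y : V₁ // y ≠ v₁}, F₁ y.1 v₁)
        + ∑ y : {y : V₁ // y ≠ v₁}, ∑ y' : {y : V₁ // y ≠ v₁}, F₁ y.1 y'.1 := by
    rw [Fintype.sum_prod_type]
    rw [sum_split v₁ (fun c => ∑ d, F₁ c d)]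
    rw [sum_split v₁ (fun d => F₁ v₁ d)]
    have : ∀ y : {y : V₁ // y ≠ v₁}, ∑ d, F₁ y.1 d
        = F₁ y.1 v₁ + ∑ y' : {y : V₁ // y ≠ v₁}, F₁ y.1 y'.1 :=
      fun y => sum_split v₁ (fun d => F₁ y.1 d)
    rw [Finset.sum_congr rfl (fun y _ => this y)]
    rw [Finset.sum_add_distrib]
    ring
  show (1/2 : ℝ) * ∑ p : duVertex V₀ V₁ v₀ v₁ × duVertex V₀ V₁ v₀ v₁, F p.1 p.2
      = (1/2 : ℝ) * (∑ p : V₀ × V₀, F₀ p.1 p.2) + (1/2 : ℝ) * (∑ p : V₁ × V₁, F₁ p.1 p.2)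
  rw [hL, hR1, h5, Fintype.sum_prod_type]
  ring

lemma cutVec_decomp (Y : Finset (duVertex V₀ V₁ v₀ v₁)) (hY : none ∉ Y) :
    cutVec (duWeight w₀ w₁ v₀ v₁) Y
      = Phi0 v₀ v₁ (cutVec w₀ (partA v₀ v₁ Y)) + Phi1 v₀ v₁ (cutVec w₁ (partB v₀ v₁ Y)) := by
  classical
  set A := partA v₀ v₁ Y with hA
  set B := partB v₀ v₁ Y with hB
  have memA' : ∀ x : {x : V₀ // x ≠ v₀}, x.1 ∈ A ↔ some (Sum.inl x) ∈ Y := by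
    intro x; rw [hA, mem_partA, emb0_inl]
  have memB' : ∀ y : {y : V₁ // y ≠ v₁}, y.1 ∈ B ↔ some (Sum.inr y) ∈ Y := by
    intro y; rw [hB, mem_partB, emb1_inr]
  have hv₀A : v₀ ∉ A := by rw [hA, mem_partA, emb0_self]; exact hY
  have hv₁B : v₁ ∉ B := by rw [hB, mem_partB, emb1_self]; exact hY
  funext p
  obtain ⟨p1, p2⟩ := p
  simp only [Pi.add_apply, Phi0_apply, Phi1_apply]
  rcases p1 with _ | (x1 | y1) <;> rcases p2 with _ | (x2 | y2) <;>
    simp only [ret0, ret1, optPull]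
  · -- none, none
    rw [cutVec_diag_eq_zero w₀ A v₀, cutVec_diag_eq_zero w₁ B v₁, add_zero]
    simp only [cutVec]
    rw [if_neg]
    rintro ⟨⟨h, -⟩ | ⟨h, -⟩, -⟩ <;> exact hY h
  · -- none, inl x2
    rw [add_zero]
    show (if _ then (1:ℝ) else 0) = (if _ then (1:ℝ) else 0)
    refine if_congr (and_congr ?_ Iff.rfl) rfl rfl
    rw [← memA' x2]
    constructor
    · rintro (⟨h, -⟩ | ⟨h, h'⟩)
      · exact absurd h hY
      · exact Or.inr ⟨h, hv₀A⟩
    · rintro (⟨h, -⟩ | ⟨h, -⟩)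
      · exact absurd h hv₀A
      · exact Or.inr ⟨h, hY⟩
  · -- none, inr y2
    rw [zero_add]
    show (if _ then (1:ℝ) else 0) = (if _ then (1:ℝ) else 0)
    refine if_congr (and_congr ?_ Iff.rfl) rfl rfl
    rw [← memB' y2]
    constructor
    · rintro (⟨h, -⟩ | ⟨h, -⟩)
      · exact absurd h hY
      · exact Or.inr ⟨h, hv₁B⟩
    · rintro (⟨h, -⟩ | ⟨h, -⟩)
      · exact absurd h hv₁B
      · exact Or.inr ⟨h, hY⟩
  · -- inl x1, none
    rw [add_zero]
    show (if _ then (1:ℝ) else 0) = (if _ then (1:ℝ) else 0)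
    refine if_congr (and_congr ?_ Iff.rfl) rfl rfl
    rw [← memA' x1]
    constructor
    · rintro (⟨h, -⟩ | ⟨h, -⟩)
      · exact Or.inl ⟨h, hv₀A⟩
      · exact absurd h hY
    · rintro (⟨h, -⟩ | ⟨h, -⟩)
      · exact Or.inl ⟨h, hY⟩
      · exact absurd h hv₀A
  · -- inl x1, inl x2
    rw [add_zero]
    show (if _ then (1:ℝ) else 0) = (if _ then (1:ℝ) else 0)
    refine if_congr (and_congr ?_ Iff.rfl) rfl rfl
    rw [memA' x1, memA' x2]
  · -- inl x1, inr y2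
    rw [add_zero]
    simp only [cutVec]
    rw [if_neg]
    rintro ⟨-, h⟩
    exact absurd h (lt_irrefl 0)
  · -- inr y1, none
    rw [zero_add]
    show (if _ then (1:ℝ) else 0) = (if _ then (1:ℝ) else 0)
    refine if_congr (and_congr ?_ Iff.rfl) rfl rfl
    rw [← memB' y1]
    constructor
    · rintro (⟨h, -⟩ | ⟨h, -⟩)
      · exact Or.inl ⟨h, hv₁B⟩
      · exact absurd h hY
    · rintro (⟨h, -⟩ | ⟨h, -⟩)
      · exact Or.inl ⟨h, hY⟩
      · exact absurd h hv₁B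
  · -- inr y1, inl x2
    rw [add_zero]
    simp only [cutVec]
    rw [if_neg]
    rintro ⟨-, h⟩
    exact absurd h (lt_irrefl 0)
  · -- inr y1, inr y2
    rw [zero_add]
    show (if _ then (1:ℝ) else 0) = (if _ then (1:ℝ) else 0)
    refine if_congr (and_congr ?_ Iff.rfl) rfl rfl
    rw [memB' y1, memB' y2]

lemma isCutShore_compl' {V : Type*} [DecidableEq V] [Fintype V] {X : Finset V}
    (h : isCutShore X) : isCutShore Xᶜ :=
  ⟨(Finset.compl_ne_univ_iff_nonempty Xᶜ).mp (by simpa using h.2),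
    (Finset.compl_ne_univ_iff_nonempty X).mpr h.1⟩

lemma emb0_ne_emb1' (a : V₀) (b : V₁) (h : emb0 v₀ v₁ a = emb1 v₀ v₁ b) : a = v₀ ∧ b = v₁ := by
  by_cases ha : a = v₀ <;> by_cases hb : b = v₁
  · exact ⟨ha, hb⟩
  · exfalso; rw [ha, emb0_self] at h; rw [emb1] at h; simp [hb] at h
  · exfalso; rw [hb, emb1_self] at h; rw [emb0] at h; simp [ha] at h
  · exfalso; rw [emb0, emb1] at h; simp [ha, hb] at h

lemma none_notMem_image0 (X : Finset V₀) (hX : v₀ ∉ X) :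
    none ∉ X.image (emb0 v₀ v₁) := by
  rw [Finset.mem_image]
  rintro ⟨a, ha, h⟩
  rw [emb0_eq_none_iff] at h
  exact hX (h ▸ ha)

lemma partA_image0 (X : Finset V₀) :
    partA v₀ v₁ (X.image (emb0 v₀ v₁)) = X := by
  ext a
  rw [mem_partA, Finset.mem_image]
  constructor
  · rintro ⟨b, hb, h⟩
    rwa [← emb0_injective v₀ v₁ h]
  · exact fun h => ⟨a, h, rfl⟩

lemma partB_image0 (X : Finset V₀) (hX : v₀ ∉ X) :
    partB v₀ v₁ (X.image (emb0 v₀ v₁)) = ∅ := by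
  ext b
  simp only [Finset.notMem_empty, iff_false, mem_partB, Finset.mem_image]
  rintro ⟨a, ha, h⟩
  obtain ⟨h1, -⟩ := emb0_ne_emb1' v₀ v₁ a b h
  exact hX (h1 ▸ ha)

lemma none_notMem_image1 (X : Finset V₁) (hX : v₁ ∉ X) :
    none ∉ X.image (emb1 v₀ v₁) := by
  rw [Finset.mem_image]
  rintro ⟨a, ha, h⟩
  rw [emb1_eq_none_iff] at h
  exact hX (h ▸ ha)

lemma partB_image1 (X : Finset V₁) :
    partB v₀ v₁ (X.image (emb1 v₀ v₁)) = X := by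
  ext a
  rw [mem_partB, Finset.mem_image]
  constructor
  · rintro ⟨b, hb, h⟩
    rwa [← emb1_injective v₀ v₁ h]
  · exact fun h => ⟨a, h, rfl⟩

lemma partA_image1 (X : Finset V₁) (hX : v₁ ∉ X) :
    partA v₀ v₁ (X.image (emb1 v₀ v₁)) = ∅ := by
  ext b
  simp only [Finset.notMem_empty, iff_false, mem_partA, Finset.mem_image]
  rintro ⟨a, ha, h⟩
  obtain ⟨-, h1⟩ := emb0_ne_emb1' v₀ v₁ b a h.symm
  exact hX (h1 ▸ ha)

lemma v₀_notMem_partA (Y : Finset (duVertex V₀ V₁ v₀ v₁)) (hY : none ∉ Y) :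
    v₀ ∉ partA v₀ v₁ Y := by
  rw [mem_partA, emb0_self]; exact hY

lemma v₁_notMem_partB (Y : Finset (duVertex V₀ V₁ v₀ v₁)) (hY : none ∉ Y) :
    v₁ ∉ partB v₀ v₁ Y := by
  rw [mem_partB, emb1_self]; exact hY

lemma shore_partA {Y : Finset (duVertex V₀ V₁ v₀ v₁)} (hY : none ∉ Y)
    (h : (partA v₀ v₁ Y).Nonempty) : isCutShore (partA v₀ v₁ Y) :=
  ⟨h, fun hu => v₀_notMem_partA v₀ v₁ Y hY (hu ▸ Finset.mem_univ v₀)⟩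

lemma shore_partB {Y : Finset (duVertex V₀ V₁ v₀ v₁)} (hY : none ∉ Y)
    (h : (partB v₀ v₁ Y).Nonempty) : isCutShore (partB v₀ v₁ Y) :=
  ⟨h, fun hu => v₁_notMem_partB v₀ v₁ Y hY (hu ▸ Finset.mem_univ v₁)⟩

lemma partA_or_partB_nonempty {Y : Finset (duVertex V₀ V₁ v₀ v₁)} (hY : none ∉ Y)
    (h : Y.Nonempty) : (partA v₀ v₁ Y).Nonempty ∨ (partB v₀ v₁ Y).Nonempty := by
  obtain ⟨p, hp⟩ := h
  rcases p with _ | (x | y)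
  · exact absurd hp hY
  · exact Or.inl ⟨x.1, (mem_partA v₀ v₁ Y x.1).mpr (by rw [emb0_inl]; exact hp)⟩
  · exact Or.inr ⟨y.1, (mem_partB v₀ v₁ Y y.1).mpr (by rw [emb1_inr]; exact hp)⟩

/-- normalization: any shore can be replaced by one avoiding `none`,
keeping weight, vector, shoreness. -/
lemma duNormalize (Z : Finset (duVertex V₀ V₁ v₀ v₁)) (hZ : isCutShore Z) :
    ∃ Y, isCutShore Y ∧ none ∉ Y ∧
      cutWeight (duWeight w₀ w₁ v₀ v₁) Y = cutWeight (duWeight w₀ w₁ v₀ v₁) Z ∧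
      cutVec (duWeight w₀ w₁ v₀ v₁) Y = cutVec (duWeight w₀ w₁ v₀ v₁) Z := by
  by_cases h : none ∈ Z
  · exact ⟨Zᶜ, isCutShore_compl' hZ, by simp [h], cutWeight_compl _ Z, cutVec_compl _ Z⟩
  · exact ⟨Z, hZ, h, rfl, rfl⟩

section Main
variable (hnn₀ : ∀ i j, 0 ≤ w₀ i j) (hnn₁ : ∀ i j, 0 ≤ w₁ i j) (c₀ c₁ : ℝ)
  (hc₀ : IsLeast {c | ∃ X : Finset V₀, isCutShore X ∧ cutWeight w₀ X = c} c₀)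
  (hc₁ : IsLeast {c | ∃ X : Finset V₁, isCutShore X ∧ cutWeight w₁ X = c} c₁)

include hnn₀ hnn₁ hc₀ hc₁

lemma du_weight_ge (Z : Finset (duVertex V₀ V₁ v₀ v₁)) (hZ : isCutShore Z) :
    min c₀ c₁ ≤ cutWeight (duWeight w₀ w₁ v₀ v₁) Z := by
  obtain ⟨Y, hYsh, hYnone, hYw, -⟩ := duNormalize v₀ v₁ w₀ w₁ Z hZ
  rw [← hYw, cutWeight_decomp v₀ v₁ w₀ w₁ Y hYnone]
  have hA0 : 0 ≤ cutWeight w₀ (partA v₀ v₁ Y) := cutWeight_nonneg w₀ hnn₀ _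
  have hB0 : 0 ≤ cutWeight w₁ (partB v₀ v₁ Y) := cutWeight_nonneg w₁ hnn₁ _
  rcases partA_or_partB_nonempty v₀ v₁ hYnone hYsh.1 with hA | hB
  · have h1 : c₀ ≤ cutWeight w₀ (partA v₀ v₁ Y) :=
      hc₀.2 ⟨partA v₀ v₁ Y, shore_partA v₀ v₁ hYnone hA, rfl⟩
    calc min c₀ c₁ ≤ c₀ := min_le_left _ _
      _ ≤ _ := by linarith
  · have h1 : c₁ ≤ cutWeight w₁ (partB v₀ v₁ Y) :=
      hc₁.2 ⟨partB v₀ v₁ Y, shore_partB v₀ v₁ hYnone hB, rfl⟩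
    calc min c₀ c₁ ≤ c₁ := min_le_right _ _
      _ ≤ _ := by linarith

lemma forward0 (h01 : c₀ ≤ c₁) (X : Finset V₀) (hX : isMinCut w₀ X) :
    ∃ Y, isMinCut (duWeight w₀ w₁ v₀ v₁) Y ∧
      cutVec (duWeight w₀ w₁ v₀ v₁) Y = Phi0 v₀ v₁ (cutVec w₀ X) ∧
      cutWeight (duWeight w₀ w₁ v₀ v₁) Y = c₀ := by
  obtain ⟨X', hX', hv₀, hvec⟩ : ∃ X', isMinCut w₀ X' ∧ v₀ ∉ X' ∧ cutVec w₀ X' = cutVec w₀ X := by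
    by_cases h : v₀ ∈ X
    · exact ⟨Xᶜ, isMinCut_compl w₀ hX, by simp [h], cutVec_compl w₀ X⟩
    · exact ⟨X, hX, h, rfl⟩
  have hXw : cutWeight w₀ X' = c₀ := ((isMinCut_iff w₀ hc₀ X').mp hX').2
  have hnone := none_notMem_image0 v₀ v₁ X' hv₀
  have hwY : cutWeight (duWeight w₀ w₁ v₀ v₁) (X'.image (emb0 v₀ v₁)) = c₀ := by
    rw [cutWeight_decomp v₀ v₁ w₀ w₁ _ hnone, partA_image0, partB_image0 v₀ v₁ X' hv₀,
      cutWeight_empty, hXw, add_zero]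
  refine ⟨X'.image (emb0 v₀ v₁), ⟨⟨hX'.1.1.image _, ?_⟩, ?_⟩, ?_, hwY⟩
  · exact fun hu => hnone (hu ▸ Finset.mem_univ none)
  · intro Z hZ
    rw [hwY]
    calc c₀ = min c₀ c₁ := (min_eq_left h01).symm
      _ ≤ _ := du_weight_ge v₀ v₁ w₀ w₁ hnn₀ hnn₁ c₀ c₁ hc₀ hc₁ Z hZ
  · rw [cutVec_decomp v₀ v₁ w₀ w₁ _ hnone, partA_image0, partB_image0 v₀ v₁ X' hv₀,
      cutVec_empty, map_zero, add_zero, hvec]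

lemma forward1 (h10 : c₁ ≤ c₀) (X : Finset V₁) (hX : isMinCut w₁ X) :
    ∃ Y, isMinCut (duWeight w₀ w₁ v₀ v₁) Y ∧
      cutVec (duWeight w₀ w₁ v₀ v₁) Y = Phi1 v₀ v₁ (cutVec w₁ X) ∧
      cutWeight (duWeight w₀ w₁ v₀ v₁) Y = c₁ := by
  obtain ⟨X', hX', hv₁, hvec⟩ : ∃ X', isMinCut w₁ X' ∧ v₁ ∉ X' ∧ cutVec w₁ X' = cutVec w₁ X := by
    by_cases h : v₁ ∈ X
    · exact ⟨Xᶜ, isMinCut_compl w₁ hX, by simp [h], cutVec_compl w₁ X⟩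
    · exact ⟨X, hX, h, rfl⟩
  have hXw : cutWeight w₁ X' = c₁ := ((isMinCut_iff w₁ hc₁ X').mp hX').2
  have hnone := none_notMem_image1 v₀ v₁ X' hv₁
  have hwY : cutWeight (duWeight w₀ w₁ v₀ v₁) (X'.image (emb1 v₀ v₁)) = c₁ := by
    rw [cutWeight_decomp v₀ v₁ w₀ w₁ _ hnone, partB_image1, partA_image1 v₀ v₁ X' hv₁,
      cutWeight_empty, hXw, zero_add]
  refine ⟨X'.image (emb1 v₀ v₁), ⟨⟨hX'.1.1.image _, ?_⟩, ?_⟩, ?_, hwY⟩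
  · exact fun hu => hnone (hu ▸ Finset.mem_univ none)
  · intro Z hZ
    rw [hwY]
    calc c₁ = min c₀ c₁ := (min_eq_right h10).symm
      _ ≤ _ := du_weight_ge v₀ v₁ w₀ w₁ hnn₀ hnn₁ c₀ c₁ hc₀ hc₁ Z hZ
  · rw [cutVec_decomp v₀ v₁ w₀ w₁ _ hnone, partB_image1, partA_image1 v₀ v₁ X' hv₁,
      cutVec_empty, map_zero, zero_add, hvec]

lemma du_mincut_weight (Y : Finset (duVertex V₀ V₁ v₀ v₁))
    (hY : isMinCut (duWeight w₀ w₁ v₀ v₁) Y) :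
    cutWeight (duWeight w₀ w₁ v₀ v₁) Y = min c₀ c₁ := by
  refine le_antisymm ?_ (du_weight_ge v₀ v₁ w₀ w₁ hnn₀ hnn₁ c₀ c₁ hc₀ hc₁ Y hY.1)
  rcases le_total c₀ c₁ with h | h
  · obtain ⟨X, hXsh, hXw⟩ := hc₀.1
    obtain ⟨Z, hZ, -, hZw⟩ := forward0 v₀ v₁ w₀ w₁ hnn₀ hnn₁ c₀ c₁ hc₀ hc₁ h X
      ((isMinCut_iff w₀ hc₀ X).mpr ⟨hXsh, hXw⟩)
    have h2 := hY.2 Z hZ.1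
    rw [hZw, ← min_eq_left h] at h2
    exact h2
  · obtain ⟨X, hXsh, hXw⟩ := hc₁.1
    obtain ⟨Z, hZ, -, hZw⟩ := forward1 v₀ v₁ w₀ w₁ hnn₀ hnn₁ c₀ c₁ hc₀ hc₁ h X
      ((isMinCut_iff w₁ hc₁ X).mpr ⟨hXsh, hXw⟩)
    have h2 := hY.2 Z hZ.1
    rw [hZw, ← min_eq_right h] at h2
    exact h2

lemma backward (Y : Finset (duVertex V₀ V₁ v₀ v₁))
    (hY : isMinCut (duWeight w₀ w₁ v₀ v₁) Y) :
    ∃ (A : Finset V₀) (B : Finset V₁),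
      cutVec (duWeight w₀ w₁ v₀ v₁) Y = Phi0 v₀ v₁ (cutVec w₀ A) + Phi1 v₀ v₁ (cutVec w₁ B) ∧
      cutWeight w₀ A + cutWeight w₁ B = min c₀ c₁ ∧
      0 ≤ cutWeight w₀ A ∧ 0 ≤ cutWeight w₁ B ∧
      (A.Nonempty ∨ B.Nonempty) ∧
      (A = ∅ ∨ (isCutShore A ∧ c₀ ≤ cutWeight w₀ A)) ∧
      (B = ∅ ∨ (isCutShore B ∧ c₁ ≤ cutWeight w₁ B)) := by
  obtain ⟨Y', hY'sh, hY'none, hY'w, hY'vec⟩ := duNormalize v₀ v₁ w₀ w₁ Y hY.1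
  refine ⟨partA v₀ v₁ Y', partB v₀ v₁ Y', ?_, ?_, cutWeight_nonneg w₀ hnn₀ _,
    cutWeight_nonneg w₁ hnn₁ _, partA_or_partB_nonempty v₀ v₁ hY'none hY'sh.1, ?_, ?_⟩
  · rw [← hY'vec, cutVec_decomp v₀ v₁ w₀ w₁ Y' hY'none]
  · rw [← cutWeight_decomp v₀ v₁ w₀ w₁ Y' hY'none, hY'w,
      du_mincut_weight v₀ v₁ w₀ w₁ hnn₀ hnn₁ c₀ c₁ hc₀ hc₁ Y hY]
  · rcases Finset.eq_empty_or_nonempty (partA v₀ v₁ Y') with h | h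
    · exact Or.inl h
    · exact Or.inr ⟨shore_partA v₀ v₁ hY'none h,
        hc₀.2 ⟨partA v₀ v₁ Y', shore_partA v₀ v₁ hY'none h, rfl⟩⟩
  · rcases Finset.eq_empty_or_nonempty (partB v₀ v₁ Y') with h | h
    · exact Or.inl h
    · exact Or.inr ⟨shore_partB v₀ v₁ hY'none h,
        hc₁.2 ⟨partB v₀ v₁ Y', shore_partB v₀ v₁ hY'none h, rfl⟩⟩

lemma case_lt (hlt : c₀ < c₁) : cdim (duWeight w₀ w₁ v₀ v₁) = cdim w₀ := by
  unfold cdim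
  have hspan : Submodule.span ℝ {v | ∃ X, isMinCut (duWeight w₀ w₁ v₀ v₁) X ∧
        v = cutVec (duWeight w₀ w₁ v₀ v₁) X}
      = Submodule.map (Phi0 v₀ v₁) (Submodule.span ℝ
        {v : V₀ × V₀ → ℝ | ∃ X, isMinCut w₀ X ∧ v = cutVec w₀ X}) := by
    rw [Submodule.map_span]
    apply le_antisymm
    · apply Submodule.span_le.mpr
      rintro v ⟨Y, hY, rfl⟩
      obtain ⟨A, B, hvec, hwsum, hA0, hB0, hne, hAalt, hBalt⟩ :=
        backward v₀ v₁ w₀ w₁ hnn₀ hnn₁ c₀ c₁ hc₀ hc₁ Y hY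
      rw [min_eq_left hlt.le] at hwsum
      have hBempty : B = ∅ := by
        rcases hBalt with h | ⟨-, hB1⟩
        · exact h
        · exfalso; linarith
      rw [hBempty, cutWeight_empty] at hwsum
      have hAne : A.Nonempty := by
        rcases hne with h | h
        · exact h
        · rw [hBempty] at h; exact absurd h (by simp)
      have hAsh : isCutShore A := by
        rcases hAalt with h | h
        · exact absurd h hAne.ne_empty
        · exact h.1
      have hAmin : isMinCut w₀ A := (isMinCut_iff w₀ hc₀ A).mpr ⟨hAsh, by linarith⟩
      rw [hvec, hBempty, cutVec_empty, map_zero, add_zero]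
      exact Submodule.subset_span ⟨cutVec w₀ A, ⟨A, hAmin, rfl⟩, rfl⟩
    · apply Submodule.span_le.mpr
      rintro v ⟨f, ⟨X, hX, rfl⟩, rfl⟩
      obtain ⟨Y, hYmin, hYvec, -⟩ := forward0 v₀ v₁ w₀ w₁ hnn₀ hnn₁ c₀ c₁ hc₀ hc₁ hlt.le X hX
      exact Submodule.subset_span ⟨Y, hYmin, hYvec.symm⟩
  rw [hspan]
  exact (LinearEquiv.finrank_eq
    (Submodule.equivMapOfInjective _ (Phi0_injective v₀ v₁) _)).symm

lemma case_gt (hlt : c₁ < c₀) : cdim (duWeight w₀ w₁ v₀ v₁) = cdim w₁ := by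
  unfold cdim
  have hspan : Submodule.span ℝ {v | ∃ X, isMinCut (duWeight w₀ w₁ v₀ v₁) X ∧
        v = cutVec (duWeight w₀ w₁ v₀ v₁) X}
      = Submodule.map (Phi1 v₀ v₁) (Submodule.span ℝ
        {v : V₁ × V₁ → ℝ | ∃ X, isMinCut w₁ X ∧ v = cutVec w₁ X}) := by
    rw [Submodule.map_span]
    apply le_antisymm
    · apply Submodule.span_le.mpr
      rintro v ⟨Y, hY, rfl⟩
      obtain ⟨A, B, hvec, hwsum, hA0, hB0, hne, hAalt, hBalt⟩ :=
        backward v₀ v₁ w₀ w₁ hnn₀ hnn₁ c₀ c₁ hc₀ hc₁ Y hY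
      rw [min_eq_right hlt.le] at hwsum
      have hAempty : A = ∅ := by
        rcases hAalt with h | ⟨-, hA1⟩
        · exact h
        · exfalso; linarith
      rw [hAempty, cutWeight_empty] at hwsum
      have hBne : B.Nonempty := by
        rcases hne with h | h
        · rw [hAempty] at h; exact absurd h (by simp)
        · exact h
      have hBsh : isCutShore B := by
        rcases hBalt with h | h
        · exact absurd h hBne.ne_empty
        · exact h.1
      have hBmin : isMinCut w₁ B := (isMinCut_iff w₁ hc₁ B).mpr ⟨hBsh, by linarith⟩
      rw [hvec, hAempty, cutVec_empty, map_zero, zero_add]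
      exact Submodule.subset_span ⟨cutVec w₁ B, ⟨B, hBmin, rfl⟩, rfl⟩
    · apply Submodule.span_le.mpr
      rintro v ⟨f, ⟨X, hX, rfl⟩, rfl⟩
      obtain ⟨Y, hYmin, hYvec, -⟩ := forward1 v₀ v₁ w₀ w₁ hnn₀ hnn₁ c₀ c₁ hc₀ hc₁ hlt.le X hX
      exact Submodule.subset_span ⟨Y, hYmin, hYvec.symm⟩
  rw [hspan]
  exact (LinearEquiv.finrank_eq
    (Submodule.equivMapOfInjective _ (Phi1_injective v₀ v₁) _)).symm

lemma case_eq (heq : c₀ = c₁) : cdim (duWeight w₀ w₁ v₀ v₁) = cdim w₀ + cdim w₁ := by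
  unfold cdim
  have hc00 : 0 ≤ c₀ := least_cutWeight_nonneg w₀ hnn₀ hc₀
  set M₀ := Submodule.span ℝ {v : V₀ × V₀ → ℝ | ∃ X, isMinCut w₀ X ∧ v = cutVec w₀ X} with hM₀
  set M₁ := Submodule.span ℝ {v : V₁ × V₁ → ℝ | ∃ X, isMinCut w₁ X ∧ v = cutVec w₁ X} with hM₁
  have hdiag0 : ∀ f ∈ M₀, f (v₀, v₀) = 0 := by
    intro f hf
    have hle : M₀ ≤ LinearMap.ker (LinearMap.proj (R := ℝ) (φ := fun _ : V₀ × V₀ => ℝ) (v₀, v₀)) := by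
      rw [hM₀]
      apply Submodule.span_le.mpr
      rintro g ⟨X, hX, rfl⟩
      exact LinearMap.mem_ker.mpr (cutVec_diag_eq_zero w₀ X v₀)
    exact LinearMap.mem_ker.mp (hle hf)
  have hspan : Submodule.span ℝ {v | ∃ X, isMinCut (duWeight w₀ w₁ v₀ v₁) X ∧
        v = cutVec (duWeight w₀ w₁ v₀ v₁) X}
      = Submodule.map (Phi0 v₀ v₁) M₀ ⊔ Submodule.map (Phi1 v₀ v₁) M₁ := by
    rw [hM₀, hM₁, Submodule.map_span, Submodule.map_span, ← Submodule.span_union]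
    apply le_antisymm
    · apply Submodule.span_le.mpr
      rintro v ⟨Y, hY, rfl⟩
      obtain ⟨A, B, hvec, hwsum, hA0, hB0, hne, hAalt, hBalt⟩ :=
        backward v₀ v₁ w₀ w₁ hnn₀ hnn₁ c₀ c₁ hc₀ hc₁ Y hY
      rw [← heq, min_self] at hwsum
      rw [hvec]
      apply Submodule.add_mem
      · rcases hAalt with h | ⟨hAsh, hA1⟩
        · rw [h, cutVec_empty, map_zero]; exact Submodule.zero_mem _
        · have hAw : cutWeight w₀ A = c₀ := by
            rcases hBalt with h' | ⟨-, hB1⟩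
            · rw [h', cutWeight_empty] at hwsum; linarith
            · rw [← heq] at hB1; linarith
          exact Submodule.subset_span (Or.inl
            ⟨cutVec w₀ A, ⟨A, (isMinCut_iff w₀ hc₀ A).mpr ⟨hAsh, hAw⟩, rfl⟩, rfl⟩)
      · rcases hBalt with h | ⟨hBsh, hB1⟩
        · rw [h, cutVec_empty, map_zero]; exact Submodule.zero_mem _
        · have hBw : cutWeight w₁ B = c₁ := by
            rcases hAalt with h' | ⟨-, hA1⟩
            · rw [h', cutWeight_empty] at hwsum; linarith
            · rw [← heq] at *; linarith
          exact Submodule.subset_span (Or.inr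
            ⟨cutVec w₁ B, ⟨B, (isMinCut_iff w₁ hc₁ B).mpr ⟨hBsh, hBw⟩, rfl⟩, rfl⟩)
    · apply Submodule.span_le.mpr
      rintro v (⟨f, ⟨X, hX, rfl⟩, rfl⟩ | ⟨f, ⟨X, hX, rfl⟩, rfl⟩)
      · obtain ⟨Y, hYmin, hYvec, -⟩ := forward0 v₀ v₁ w₀ w₁ hnn₀ hnn₁ c₀ c₁ hc₀ hc₁ heq.le X hX
        exact Submodule.subset_span ⟨Y, hYmin, hYvec.symm⟩
      · obtain ⟨Y, hYmin, hYvec, -⟩ := forward1 v₀ v₁ w₀ w₁ hnn₀ hnn₁ c₀ c₁ hc₀ hc₁ heq.ge X hX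
        exact Submodule.subset_span ⟨Y, hYmin, hYvec.symm⟩
  have hinf : Submodule.map (Phi0 v₀ v₁) M₀ ⊓ Submodule.map (Phi1 v₀ v₁) M₁ = ⊥ := by
    rw [Submodule.eq_bot_iff]
    intro g hg
    obtain ⟨hg0, hg1⟩ := Submodule.mem_inf.mp hg
    obtain ⟨f, hf, rfl⟩ := Submodule.mem_map.mp hg0
    obtain ⟨h, hh, hhg⟩ := Submodule.mem_map.mp hg1
    funext p
    obtain ⟨p1, p2⟩ := p
    have hP1 : ∀ q1 q2, ret1 v₀ v₁ q1 = none ∨ ret1 v₀ v₁ q2 = none →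
        Phi0 v₀ v₁ f (q1, q2) = 0 := by
      rintro q1 q2 h'
      rw [← hhg]
      rcases h' with h' | h' <;>
        · rw [Phi1_apply, h']
          rcases h'' : ret1 v₀ v₁ q1 with _ | a <;> rcases h''' : ret1 v₀ v₁ q2 with _ | b <;>
            simp_all [optPull]
    show Phi0 v₀ v₁ f (p1, p2) = 0
    rcases p1 with _ | (x1 | y1) <;> rcases p2 with _ | (x2 | y2)
    · rw [Phi0_apply]
      show optPull f (some v₀) (some v₀) = 0
      exact hdiag0 f hf
    · exact hP1 _ _ (Or.inr rfl)
    · rw [Phi0_apply]; rfl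
    · exact hP1 _ _ (Or.inl rfl)
    · exact hP1 _ _ (Or.inl rfl)
    · rw [Phi0_apply]; rfl
    · rw [Phi0_apply]; rfl
    · rw [Phi0_apply]; rfl
    · rw [Phi0_apply]; rfl
  have hadd := Submodule.finrank_sup_add_finrank_inf_eq
    (Submodule.map (Phi0 v₀ v₁) M₀) (Submodule.map (Phi1 v₀ v₁) M₁)
  rw [hinf, finrank_bot] at hadd
  have he0 : Module.finrank ℝ (Submodule.map (Phi0 v₀ v₁) M₀) = Module.finrank ℝ M₀ :=
    (LinearEquiv.finrank_eq (Submodule.equivMapOfInjective _ (Phi0_injective v₀ v₁) _)).symm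
  have he1 : Module.finrank ℝ (Submodule.map (Phi1 v₀ v₁) M₁) = Module.finrank ℝ M₁ :=
    (LinearEquiv.finrank_eq (Submodule.equivMapOfInjective _ (Phi1_injective v₀ v₁) _)).symm
  rw [hspan]
  omega

end Main
end DU

/-- Cut dimension of a direct union: if the two minimum cut weights agree it is the sum of
the cut dimensions, and otherwise it equals the cut dimension of the lighter part. -/
theorem stmt6 {V₀ V₁ : Type*} [DecidableEq V₀] [Fintype V₀] [DecidableEq V₁] [Fintype V₁]
    (w₀ : V₀ → V₀ → ℝ) (w₁ : V₁ → V₁ → ℝ) (v₀ : V₀) (v₁ : V₁)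
    (hsym₀ : ∀ i j, w₀ i j = w₀ j i) (hnn₀ : ∀ i j, 0 ≤ w₀ i j)
    (hsym₁ : ∀ i j, w₁ i j = w₁ j i) (hnn₁ : ∀ i j, 0 ≤ w₁ i j)
    (c₀ c₁ : ℝ)
    (hc₀ : IsLeast {c | ∃ X : Finset V₀, isCutShore X ∧ cutWeight w₀ X = c} c₀)
    (hc₁ : IsLeast {c | ∃ X : Finset V₁, isCutShore X ∧ cutWeight w₁ X = c} c₁) :
    (c₀ = c₁ → cdim (duWeight w₀ w₁ v₀ v₁) = cdim w₀ + cdim w₁) ∧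
    (c₀ < c₁ → cdim (duWeight w₀ w₁ v₀ v₁) = cdim w₀) ∧
    (c₁ < c₀ → cdim (duWeight w₀ w₁ v₀ v₁) = cdim w₁) :=
  ⟨fun heq => case_eq v₀ v₁ w₀ w₁ hnn₀ hnn₁ c₀ c₁ hc₀ hc₁ heq,
   fun hlt => case_lt v₀ v₁ w₀ w₁ hnn₀ hnn₁ c₀ c₁ hc₀ hc₁ hlt,
   fun hlt => case_gt v₀ v₁ w₀ w₁ hnn₀ hnn₁ c₀ c₁ hc₀ hc₁ hlt⟩
end

section
/- Let T be an arborescence with root r, ψ : E(T) → ℝ, U a finite set, and φ : U → V(T), such that: (1) r is labeled (is in the image of φ) and has out-degree 1; (2) every internal vertex is unlabeled and has out-degree 2; (3) every leaf is labeled; (4) for every s, t ∈ U the sum of ψ(e) over the edges on the undirected path from φ(s) to φ(t) is 0. Then ψ is identically 0. -/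
open Finset

/-- An arborescence is encoded by a parent map `p` with `p r = r` and every vertex reaching the
root `r` by iterating `p`; the edge into a non-root vertex `v` is identified with `v`, `ψ v` is
the value on that edge, and `P v` is the set of edges on the path from the root to `v`.
If the root is labeled and has out-degree 1, every internal vertex is unlabeled with
out-degree 2, every leaf is labeled, and the sum of `ψ` over the edges of the undirected path
between any two labeled vertices vanishes, then `ψ` vanishes on every edge. -/
theorem stmt7 {α U : Type*} [DecidableEq α] [Fintype α] [Fintype U]
    (r : α) (p : α → α) (ψ : α → ℝ) (φ : U → α) (P : α → Finset α)
    (hp : p r = r) (hreach : ∀ v, ∃ k, p^[k] v = r)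
    (hP0 : P r = ∅) (hPs : ∀ v, v ≠ r → P v = insert v (P (p v)))
    (hrootlab : ∃ u, φ u = r)
    (hrootdeg : (Finset.univ.filter (fun v : α => p v = r ∧ v ≠ r)).card = 1)
    (hinternal : ∀ v : α, v ≠ r → (∃ v', p v' = v ∧ v' ≠ r) →
      (¬ ∃ u, φ u = v) ∧ (Finset.univ.filter (fun v' : α => p v' = v ∧ v' ≠ r)).card = 2)
    (hleaf : ∀ v : α, v ≠ r → (¬ ∃ v', p v' = v ∧ v' ≠ r) → ∃ u, φ u = v)
    (hpath : ∀ s t : U,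
      ∑ e ∈ (P (φ s) \ P (φ t)) ∪ (P (φ t) \ P (φ s)), ψ e = 0) :
    ∀ v : α, v ≠ r → ψ v = 0 := by
  classical
  have iter_r : ∀ k, p^[k] r = r := fun k => Function.iterate_fixed hp k
  -- no nontrivial cycles off the root
  have noCycle : ∀ v m, v ≠ r → m ≠ 0 → p^[m] v = v → False := by
    intro v m hv hm hcyc
    obtain ⟨k, hk⟩ := hreach v
    have hqm : ∀ q, p^[q * m] v = v := by
      intro q
      induction q with
      | zero => simp
      | succ q ih =>
        rw [Nat.succ_mul, Function.iterate_add_apply, hcyc, ih]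
    have hle : k ≤ k * m := Nat.le_mul_of_pos_right k (Nat.pos_of_ne_zero hm)
    have : v = r := by
      calc v = p^[k * m] v := (hqm k).symm
        _ = p^[k * m - k] (p^[k] v) := by
            rw [← Function.iterate_add_apply]; congr 1; omega
        _ = r := by rw [hk]; exact iter_r _
    exact hv this
  -- characterization of membership in P
  have memP : ∀ n v, p^[n] v = r → ∀ w, (w ∈ P v ↔ (w ≠ r ∧ ∃ j, p^[j] v = w)) := by
    intro n
    induction n with
    | zero =>
      intro v hv w
      simp only [Function.iterate_zero_apply] at hv
      subst hv
      rw [hP0]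
      simp only [Finset.notMem_empty, false_iff]
      rintro ⟨hw, j, hj⟩
      exact hw (by rw [← hj]; exact iter_r j)
    | succ n ih =>
      intro v hv w
      by_cases hvr : v = r
      · subst hvr
        rw [hP0]
        simp only [Finset.notMem_empty, false_iff]
        rintro ⟨hw, j, hj⟩
        exact hw (by rw [← hj]; exact iter_r j)
      · have hpv : p^[n] (p v) = r := by
          rw [← Function.iterate_succ_apply]; exact hv
        rw [hPs v hvr, Finset.mem_insert]
        constructor
        · rintro (rfl | hw)
          · exact ⟨hvr, 0, rfl⟩
          · obtain ⟨hw1, j, hj⟩ := (ih (p v) hpv w).mp hw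
            exact ⟨hw1, j + 1, by rw [Function.iterate_succ_apply]; exact hj⟩
        · rintro ⟨hw1, j, hj⟩
          cases j with
          | zero =>
            left
            simp only [Function.iterate_zero_apply] at hj
            exact hj.symm
          | succ j =>
            right
            exact (ih (p v) hpv w).mpr
              ⟨hw1, j, by rw [← Function.iterate_succ_apply]; exact hj⟩
  have memP' : ∀ v w, w ∈ P v ↔ (w ≠ r ∧ ∃ j, p^[j] v = w) := by
    intro v w
    obtain ⟨n, hn⟩ := hreach v
    exact memP n v hn w
  -- P is monotone along ancestors
  have Psub : ∀ (j : ℕ) (v : α), P (p^[j] v) ⊆ P v := by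
    intro j v w hw
    rw [memP'] at hw ⊢
    obtain ⟨hw1, i, hi⟩ := hw
    exact ⟨hw1, i + j, by rw [Function.iterate_add_apply]; exact hi⟩
  -- depth
  have dspec : ∀ v, p^[Nat.find (hreach v)] v = r := fun v => Nat.find_spec (hreach v)
  have dmin : ∀ v k, k < Nat.find (hreach v) → p^[k] v ≠ r :=
    fun v k hk => Nat.find_min (hreach v) hk
  have dchild : ∀ v c, p c = v → c ≠ r → Nat.find (hreach c) = Nat.find (hreach v) + 1 := by
    intro v c hc hcr
    have hle1 : Nat.find (hreach c) ≤ Nat.find (hreach v) + 1 :=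
      Nat.find_le (by rw [Function.iterate_succ_apply, hc]; exact dspec v)
    have hne0 : Nat.find (hreach c) ≠ 0 := by
      intro h0
      have hs := dspec c
      rw [h0] at hs
      simp only [Function.iterate_zero_apply] at hs
      exact hcr hs
    have hge : Nat.find (hreach v) + 1 ≤ Nat.find (hreach c) := by
      have hs : p^[Nat.find (hreach c) - 1] v = r := by
        have hs := dspec c
        rw [show Nat.find (hreach c) = (Nat.find (hreach c) - 1) + 1 by omega,
          Function.iterate_succ_apply, hc] at hs
        exact hs
      have hfl : Nat.find (hreach v) ≤ Nat.find (hreach c) - 1 := Nat.find_le hs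
      omega
    omega
  have dbound : ∀ v, Nat.find (hreach v) < Fintype.card α := by
    intro v
    have key : ∀ i j : ℕ, i < j → j ≤ Nat.find (hreach v) → p^[i] v = p^[j] v → False := by
      intro i j hij hjle hEq
      have hcontra : p^[Nat.find (hreach v) - (j - i)] v = r := by
        calc p^[Nat.find (hreach v) - (j - i)] v
            = p^[(Nat.find (hreach v) - j) + i] v := by congr 1; omega
          _ = p^[Nat.find (hreach v) - j] (p^[i] v) := Function.iterate_add_apply p _ i v
          _ = p^[Nat.find (hreach v) - j] (p^[j] v) := by rw [hEq]
          _ = p^[(Nat.find (hreach v) - j) + j] v := (Function.iterate_add_apply p _ j v).symm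
          _ = r := by rw [show Nat.find (hreach v) - j + j = Nat.find (hreach v) by omega]
                      exact dspec v
      exact dmin v _ (by omega) hcontra
    have hinj : Function.Injective (fun i : Fin (Nat.find (hreach v) + 1) => p^[(i : ℕ)] v) := by
      intro i j hij
      simp only at hij
      rcases lt_trichotomy (i : ℕ) (j : ℕ) with h | h | h
      · exact (key i j h (Nat.lt_succ_iff.mp j.isLt) hij).elim
      · exact Fin.ext h
      · exact (key j i h (Nat.lt_succ_iff.mp i.isLt) hij.symm).elim
    have hcle := Fintype.card_le_of_injective _ hinj
    have : Nat.find (hreach v) + 1 ≤ Fintype.card α := by simpa using hcle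
    omega
  -- every vertex has a labeled descendant
  have labdesc : ∀ n v, Fintype.card α - Nat.find (hreach v) ≤ n → ∃ u j, p^[j] (φ u) = v := by
    intro n
    induction n with
    | zero =>
      intro v h
      have := dbound v
      omega
    | succ n ih =>
      intro v hle
      by_cases hlab : ∃ u, φ u = v
      · obtain ⟨u, hu⟩ := hlab; exact ⟨u, 0, hu⟩
      · have hvr : v ≠ r := by rintro rfl; exact hlab hrootlab
        have hchild : ∃ c, p c = v ∧ c ≠ r := by
          by_contra hc
          exact hlab (hleaf v hvr hc)
        obtain ⟨c, hc, hcr⟩ := hchild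
        have hdc := dchild v c hc hcr
        obtain ⟨u, j, hj⟩ := ih c (by rw [hdc]; omega)
        exact ⟨u, j + 1, by rw [Function.iterate_succ_apply', hj, hc]⟩
  have labdesc' : ∀ v, ∃ u j, p^[j] (φ u) = v := fun v => labdesc _ v le_rfl
  -- path sums to labeled vertices vanish
  obtain ⟨u0, hu0⟩ := hrootlab
  have flab : ∀ u, ∑ e ∈ P (φ u), ψ e = 0 := by
    intro u
    have h := hpath u u0
    rw [hu0, hP0] at h
    simpa using h
  have finter : ∀ s t : U, ∑ e ∈ P (φ s) ∩ P (φ t), ψ e = 0 := by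
    intro s t
    have h0 := hpath s t
    rw [Finset.sum_union disjoint_sdiff_sdiff] at h0
    have h1 := Finset.sum_inter_add_sum_sdiff (P (φ s)) (P (φ t)) ψ
    have h2 := Finset.sum_inter_add_sum_sdiff (P (φ t)) (P (φ s)) ψ
    have h3 : ∑ e ∈ P (φ s) ∩ P (φ t), ψ e = ∑ e ∈ P (φ t) ∩ P (φ s), ψ e := by
      rw [Finset.inter_comm]
    linarith [flab s, flab t]
  -- all path sums vanish
  have fzero : ∀ v, ∑ e ∈ P v, ψ e = 0 := by
    intro v
    by_cases hvr : v = r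
    · subst hvr; simp [hP0]
    by_cases hlab : ∃ u, φ u = v
    · obtain ⟨u, rfl⟩ := hlab; exact flab u
    have hchild : ∃ c, p c = v ∧ c ≠ r := by
      by_contra hc
      exact hlab (hleaf v hvr hc)
    obtain ⟨-, hcard⟩ := hinternal v hvr hchild
    obtain ⟨c1, hc1mem, c2, hc2mem, hc12⟩ :=
      Finset.one_lt_card.mp (by omega :
        1 < (Finset.univ.filter (fun v' : α => p v' = v ∧ v' ≠ r)).card)
    simp only [Finset.mem_filter, Finset.mem_univ, true_and] at hc1mem hc2mem
    obtain ⟨hpc1, hc1r⟩ := hc1mem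
    obtain ⟨hpc2, hc2r⟩ := hc2mem
    obtain ⟨u1, j1, hj1⟩ := labdesc' c1
    obtain ⟨u2, j2, hj2⟩ := labdesc' c2
    have hPeq : P (φ u1) ∩ P (φ u2) = P v := by
      apply Finset.Subset.antisymm
      · intro w hw
        rw [Finset.mem_inter] at hw
        obtain ⟨hw1, hw2⟩ := hw
        rw [memP'] at hw1 hw2 ⊢
        obtain ⟨hwr, a, ha⟩ := hw1
        obtain ⟨-, b, hb⟩ := hw2
        refine ⟨hwr, ?_⟩
        have key : ∀ (c c' : α) (m m' : ℕ), p c = v → p c' = v → m < m' →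
            p^[m] w = c → p^[m'] w = c' → False := by
          intro c c' m m' hc hc' hmm hm hm'
          have haux : p^[m' - m - 1] (p^[m + 1] w) = p^[m'] w := by
            rw [← Function.iterate_add_apply]; congr 1; omega
          have h1 : p^[m' - m - 1] v = c' := by
            rw [← hc, ← hm, ← Function.iterate_succ_apply' p m w, haux]
            exact hm'
          have hcyc : p^[(m' - m - 1) + 1] v = v := by
            rw [Function.iterate_succ_apply', h1, hc']
          exact noCycle v _ hvr (by omega) hcyc
        rcases Nat.lt_or_ge j1 a with hcase1 | hcase1
        · refine ⟨a - j1 - 1, ?_⟩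
          calc p^[a - j1 - 1] v
              = p^[a - j1 - 1] (p (p^[j1] (φ u1))) := by rw [hj1, hpc1]
            _ = p^[(a - j1 - 1) + (j1 + 1)] (φ u1) := by
                rw [← Function.iterate_succ_apply' p j1 (φ u1), ← Function.iterate_add_apply]
            _ = p^[a] (φ u1) := by congr 1; omega
            _ = w := ha
        · have hm1 : p^[j1 - a] w = c1 := by
            rw [← ha, ← Function.iterate_add_apply,
              show j1 - a + a = j1 by omega]
            exact hj1
          rcases Nat.lt_or_ge j2 b with hcase2 | hcase2
          · refine ⟨b - j2 - 1, ?_⟩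
            calc p^[b - j2 - 1] v
                = p^[b - j2 - 1] (p (p^[j2] (φ u2))) := by rw [hj2, hpc2]
              _ = p^[(b - j2 - 1) + (j2 + 1)] (φ u2) := by
                  rw [← Function.iterate_succ_apply' p j2 (φ u2), ← Function.iterate_add_apply]
              _ = p^[b] (φ u2) := by congr 1; omega
              _ = w := hb
          · have hm2 : p^[j2 - b] w = c2 := by
              rw [← hb, ← Function.iterate_add_apply,
                show j2 - b + b = j2 by omega]
              exact hj2
            rcases lt_trichotomy (j1 - a) (j2 - b) with h | h | h
            · exact (key c1 c2 _ _ hpc1 hpc2 h hm1 hm2).elim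
            · exact absurd (show c1 = c2 by rw [← hm1, h]; exact hm2) hc12
            · exact (key c2 c1 _ _ hpc2 hpc1 h hm2 hm1).elim
      · refine Finset.subset_inter ?_ ?_
        · calc P v ⊆ P c1 := by
                rw [hPs c1 hc1r, hpc1]; exact Finset.subset_insert _ _
            _ = P (p^[j1] (φ u1)) := by rw [hj1]
            _ ⊆ P (φ u1) := Psub j1 (φ u1)
        · calc P v ⊆ P c2 := by
                rw [hPs c2 hc2r, hpc2]; exact Finset.subset_insert _ _
            _ = P (p^[j2] (φ u2)) := by rw [hj2]
            _ ⊆ P (φ u2) := Psub j2 (φ u2)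
    rw [← hPeq]
    exact finter u1 u2
  -- conclude
  intro v hvr
  have h1 : ∑ e ∈ P v, ψ e = 0 := fzero v
  have h2 : ∑ e ∈ P (p v), ψ e = 0 := fzero (p v)
  have hv : v ∉ P (p v) := by
    rw [memP']
    rintro ⟨-, j, hj⟩
    exact noCycle v (j + 1) hvr (by omega)
      (by rw [Function.iterate_succ_apply]; exact hj)
  rw [hPs v hvr, Finset.sum_insert hv] at h1
  linarith
end

section
/- Let G = ([n], w) be a complete weighted graph (w strictly positive on all pairs) and let ℒ be a cross-free family of cuts of G. Then the characteristic vectors {χ(S) : S ∈ ℒ} ⊆ {0,1}^{C(n,2)} are linearly independent. -/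
open Finset

lemma crossing_compl_left {V : Type*} [DecidableEq V] [Fintype V] (X Y : Finset V) :
    crossing Xᶜ Y ↔ crossing X Y := by
  simp only [crossing, Finset.Nonempty, Finset.mem_inter, Finset.mem_sdiff,
    Finset.mem_compl, compl_compl, not_not]
  tauto

lemma crossing_compl_right {V : Type*} [DecidableEq V] [Fintype V] (X Y : Finset V) :
    crossing X Yᶜ ↔ crossing X Y := by
  simp only [crossing, Finset.Nonempty, Finset.mem_inter, Finset.mem_sdiff,
    Finset.mem_compl, compl_compl, not_not]
  tauto



lemma laminar_aux {n : ℕ} {ι : Type*} [Fintype ι] [DecidableEq ι] (r : Fin n)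
    (A : ι → Finset (Fin n)) (hinj : Function.Injective A)
    (hne : ∀ i, (A i).Nonempty) (hr : ∀ i, r ∉ A i)
    (hlam : ∀ i j, A i ⊆ A j ∨ A j ⊆ A i ∨ A i ∩ A j = ∅)
    (c : ι → ℝ)
    (h : ∀ u v : Fin n, u ≠ v →
      ∑ i, c i * (if ((u ∈ A i) ↔ (v ∈ A i)) then 0 else 1) = 0) :
    ∀ i, c i = 0 := by
  -- Step 1: vertex sums vanish
  have hg1 : ∀ u : Fin n, ∑ i, (if u ∈ A i then c i else 0) = 0 := by
    intro u
    by_cases hu : u = r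
    · subst hu; simp [hr]
    · refine Eq.trans ?_ (h u r hu)
      apply Finset.sum_congr rfl
      intro i _
      by_cases hm : u ∈ A i <;> simp [hm, hr i]
  -- Step 2: pair sums vanish
  have hB : ∀ u v : Fin n, u ≠ v →
      ∑ i, (if u ∈ A i ∧ v ∈ A i then c i else 0) = 0 := by
    intro u v huv
    have h1 := h u v huv
    have key : ∀ i, c i * (if ((u ∈ A i) ↔ (v ∈ A i)) then 0 else 1)
        = (if u ∈ A i then c i else 0) + (if v ∈ A i then c i else 0)
          - 2 * (if u ∈ A i ∧ v ∈ A i then c i else 0) := by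
      intro i
      by_cases h4 : u ∈ A i <;> by_cases h5 : v ∈ A i <;> simp [h4, h5] <;> ring
    rw [Finset.sum_congr rfl (fun i _ => key i)] at h1
    rw [Finset.sum_sub_distrib, Finset.sum_add_distrib, ← Finset.mul_sum,
      hg1 u, hg1 v] at h1
    linarith
  -- Step 3: superset sums vanish
  have hT : ∀ j, ∑ i, (if A j ⊆ A i then c i else 0) = 0 := by
    intro j
    by_cases hocc : ∃ u ∈ A j, ∀ i, u ∈ A i → A j ⊆ A i
    · obtain ⟨u, hu, hmin⟩ := hocc
      have hiff : ∀ i, (A j ⊆ A i) ↔ (u ∈ A i) :=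
        fun i => ⟨fun hs => hs hu, hmin i⟩
      exact Eq.trans (Finset.sum_congr rfl fun i _ => if_congr (hiff i) rfl rfl) (hg1 u)
    · push_neg at hocc
      obtain ⟨u, hu⟩ := hne j
      obtain ⟨i₀, hui₀, hni₀⟩ := hocc u hu
      set S := Finset.univ.filter (fun i => u ∈ A i ∧ ¬ A j ⊆ A i) with hS
      have hSne : S.Nonempty := ⟨i₀, by simp [hS, hui₀, hni₀]⟩
      obtain ⟨i₁, hi₁, hmax⟩ := S.exists_max_image (fun i => (A i).card) hSne
      have hmem : u ∈ A i₁ ∧ ¬ A j ⊆ A i₁ := by simpa [hS] using hi₁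
      have hsub : A i₁ ⊆ A j := by
        rcases hlam i₁ j with h' | h' | h'
        · exact h'
        · exact absurd h' hmem.2
        · exfalso
          have : u ∈ A i₁ ∩ A j := Finset.mem_inter.mpr ⟨hmem.1, hu⟩
          rw [h'] at this
          exact absurd this (Finset.notMem_empty u)
      have hss : A i₁ ⊂ A j := Finset.ssubset_iff_subset_ne.mpr
        ⟨hsub, fun e => hmem.2 (le_of_eq e.symm)⟩
      obtain ⟨v, hvj, hvi₁⟩ := Finset.exists_of_ssubset hss
      have huv : u ≠ v := fun e => hvi₁ (e ▸ hmem.1)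
      have hiff : ∀ i, (A j ⊆ A i) ↔ (u ∈ A i ∧ v ∈ A i) := by
        intro i
        constructor
        · exact fun hs => ⟨hs hu, hs hvj⟩
        · rintro ⟨hui, hvi⟩
          have h1 : A i₁ ⊆ A i := by
            rcases hlam i i₁ with h' | h' | h'
            · exact absurd (h' hvi) hvi₁
            · exact h'
            · exfalso
              have : u ∈ A i ∩ A i₁ := Finset.mem_inter.mpr ⟨hui, hmem.1⟩
              rw [h'] at this
              exact absurd this (Finset.notMem_empty u)
          rcases hlam i j with h' | h' | h'
          · by_cases he : A i = A j
            · exact le_of_eq he.symm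
            · exfalso
              have hiS : i ∈ S := by
                simp only [hS, Finset.mem_filter, Finset.mem_univ, true_and]
                exact ⟨hui, fun hsub' => he (Finset.Subset.antisymm h' hsub')⟩
              have hcard := hmax i hiS
              have hlt : A i₁ ⊂ A i := Finset.ssubset_iff_subset_ne.mpr
                ⟨h1, fun e => hvi₁ (e ▸ hvi)⟩
              exact absurd hcard (not_le.mpr (Finset.card_lt_card hlt))
          · exact h'
          · exfalso
            have : u ∈ A i ∩ A j := Finset.mem_inter.mpr ⟨hui, hu⟩
            rw [h'] at this
            exact absurd this (Finset.notMem_empty u)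
      exact Eq.trans (Finset.sum_congr rfl fun i _ => if_congr (hiff i) rfl rfl)
        (hB u v huv)
  -- Step 4: conclude
  intro j
  have hsplit : ∑ i, (if A j ⊆ A i then c i else 0)
      = c j + ∑ i, (if A j ⊂ A i then c i else 0) := by
    have hpt : ∀ i, (if A j ⊆ A i then c i else 0)
        = (if i = j then c i else 0) + (if A j ⊂ A i then c i else 0) := by
      intro i
      by_cases he : i = j
      · subst he; simp [ssubset_irrefl]
      · by_cases hs : A j ⊆ A i
        · have hne' : A j ≠ A i := fun e => he (hinj e.symm)
          have : A j ⊂ A i := Finset.ssubset_iff_subset_ne.mpr ⟨hs, hne'⟩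
          simp [hs, he, this]
        · have hns : ¬ A j ⊂ A i := fun h' => hs h'.1
          simp [hs, he, hns]
    rw [Finset.sum_congr rfl (fun i _ => hpt i), Finset.sum_add_distrib]
    simp
  have hU : ∑ i, (if A j ⊂ A i then c i else 0) = 0 := by
    by_cases hex : ∃ i, A j ⊂ A i
    · set S' := Finset.univ.filter (fun i => A j ⊂ A i) with hS'
      have hS'ne : S'.Nonempty := by
        obtain ⟨i, hi⟩ := hex
        exact ⟨i, by simp [hS', hi]⟩
      obtain ⟨j₁, hj₁, hmin⟩ := S'.exists_min_image (fun i => (A i).card) hS'ne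
      have hj₁p : A j ⊂ A j₁ := by simpa [hS'] using hj₁
      have hiff : ∀ i, (A j ⊂ A i) ↔ (A j₁ ⊆ A i) := by
        intro i
        constructor
        · intro hi
          rcases hlam i j₁ with h' | h' | h'
          · have hiS : i ∈ S' := by simp [hS', hi]
            have := hmin i hiS
            exact le_of_eq (Finset.eq_of_subset_of_card_le h' this).symm
          · exact h'
          · exfalso
            obtain ⟨x, hx⟩ := hne j
            have : x ∈ A i ∩ A j₁ := Finset.mem_inter.mpr ⟨hi.1 hx, hj₁p.1 hx⟩
            rw [h'] at this
            exact absurd this (Finset.notMem_empty x)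
        · exact fun hs => lt_of_lt_of_le hj₁p hs
      exact Eq.trans (Finset.sum_congr rfl fun i _ => if_congr (hiff i) rfl rfl) (hT j₁)
    · push_neg at hex
      exact Finset.sum_eq_zero fun i _ => by simp [hex i]
  have := hT j
  rw [hsplit, hU] at this
  linarith

/-- In a complete weighted graph, the characteristic vectors of the cuts of a cross-free
family of (distinct) cuts are linearly independent. -/
theorem stmt8 (n : ℕ) (w : Fin n → Fin n → ℝ)
    (hsym : ∀ i j, w i j = w j i) (hpos : ∀ i j, i ≠ j → 0 < w i j)
    (L : Finset (Finset (Fin n)))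
    (hshore : ∀ X ∈ L, X.Nonempty ∧ X ≠ Finset.univ)
    (hdist : ∀ X ∈ L, ∀ Y ∈ L, X ≠ Y → Y ≠ Xᶜ)
    (hcrossfree : ∀ X ∈ L, ∀ Y ∈ L, ¬ crossing X Y) :
    LinearIndependent ℝ (fun X : {X // X ∈ L} => cutVec w X.1) := by
  rw [Fintype.linearIndependent_iff]
  intro g hg i
  obtain ⟨r, hrX⟩ := (hshore i.1 i.2).1
  set A : {X // X ∈ L} → Finset (Fin n) := fun j => if r ∈ j.1 then j.1ᶜ else j.1 with hA
  -- cutVec is invariant under complementation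
  have hcompl : ∀ X : Finset (Fin n), cutVec w Xᶜ = cutVec w X := by
    intro X
    funext p
    unfold cutVec
    refine if_congr ?_ rfl rfl
    simp only [Finset.mem_compl, not_not]
    tauto
  have hAcv : ∀ j : {X // X ∈ L}, cutVec w (A j) = cutVec w j.1 := by
    intro j
    by_cases hj : r ∈ j.1 <;> simp [hA, hj, hcompl]
  -- injectivity
  have hinj : Function.Injective A := by
    intro x y hxy
    apply Subtype.ext
    by_cases hx : r ∈ x.1 <;> by_cases hy : r ∈ y.1 <;> simp only [hA, hx, hy,
      if_pos, if_neg, if_true, if_false] at hxy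
    · have := congrArg (·ᶜ) hxy
      simpa using this
    · exfalso
      have hne2 : x.1 ≠ y.1 := fun e => hy (e ▸ hx)
      exact hdist x.1 x.2 y.1 y.2 hne2 hxy.symm
    · exfalso
      have hne2 : y.1 ≠ x.1 := fun e => hx (e ▸ hy)
      exact hdist y.1 y.2 x.1 x.2 hne2 hxy
    · exact hxy
  -- nonempty
  have hne : ∀ j, (A j).Nonempty := by
    intro j
    by_cases hj : r ∈ j.1 <;> simp only [hA, hj, if_true, if_false]
    · exact (Finset.compl_ne_univ_iff_nonempty _).mp (by simpa using (hshore j.1 j.2).2)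
    · exact (hshore j.1 j.2).1
  -- r not in any
  have hrA : ∀ j, r ∉ A j := by
    intro j
    by_cases hj : r ∈ j.1 <;> simp [hA, hj]
  -- laminarity
  have hlam : ∀ x y, A x ⊆ A y ∨ A y ⊆ A x ∨ A x ∩ A y = ∅ := by
    intro x y
    have hncross : ¬ crossing (A x) (A y) := by
      have h0 := hcrossfree x.1 x.2 y.1 y.2
      by_cases hx : r ∈ x.1 <;> by_cases hy : r ∈ y.1 <;>
        simp only [hA, hx, hy, if_true, if_false] <;>
        simp [crossing_compl_left, crossing_compl_right, h0]
    by_contra hcon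
    push_neg at hcon
    obtain ⟨h1, h2, h3⟩ := hcon
    refine hncross ⟨h3,
      Finset.sdiff_nonempty.mpr h1, Finset.sdiff_nonempty.mpr h2,
      ⟨r, Finset.mem_inter.mpr ⟨Finset.mem_compl.mpr (hrA x), Finset.mem_compl.mpr (hrA y)⟩⟩⟩
  -- the sum condition
  have hsum : ∀ u v : Fin n, u ≠ v →
      ∑ j, g j * (if ((u ∈ A j) ↔ (v ∈ A j)) then 0 else 1) = 0 := by
    intro u v huv
    have := congrFun hg (u, v)
    simp only [Finset.sum_apply, Pi.smul_apply, smul_eq_mul, Pi.zero_apply] at this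
    refine Eq.trans ?_ this
    apply Finset.sum_congr rfl
    intro j _
    congr 1
    rw [← hAcv j]
    unfold cutVec
    by_cases h1 : u ∈ A j <;> by_cases h2 : v ∈ A j <;>
      simp [h1, h2, hpos u v huv]
  exact laminar_aux r A hinj hne hrA hlam g hsum i
end

section
/- Let ℒ be a maximal cross-free family of cuts of a graph on n vertices. Then |ℒ| = 2n − 3. -/
open Finset

lemma overlap_of_crossing {V : Type*} [DecidableEq V] [Fintype V] {X Y : Finset V}
    (h : crossing X Y) : overlap X Y := ⟨h.1, h.2.1, h.2.2.1⟩

lemma crossing_of_overlap {V : Type*} [DecidableEq V] [Fintype V] {X Y : Finset V} {v : V}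
    (h : overlap X Y) (hx : v ∉ X) (hy : v ∉ Y) : crossing X Y :=
  ⟨h.1, h.2.1, h.2.2, ⟨v, by simp [Finset.mem_inter, Finset.mem_compl, hx, hy]⟩⟩

/-- A maximal laminar family of nonempty subsets of `U` has `2|U| - 1` members. -/
lemma laminar_card {V : Type*} [DecidableEq V] (U : Finset V) :
    ∀ F : Finset (Finset V), U.Nonempty →
    (∀ X ∈ F, X.Nonempty) → (∀ X ∈ F, X ⊆ U) →
    (∀ X ∈ F, ∀ Y ∈ F, ¬ overlap X Y) →
    (∀ S : Finset V, S.Nonempty → S ⊆ U → S ∉ F → ∃ X ∈ F, overlap S X) →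
    F.card = 2 * U.card - 1 := by
  induction U using Finset.strongInduction with
  | _ U IH =>
  intro F hUne h1 h2 h3 h4
  -- U belongs to F
  have hUF : U ∈ F := by
    by_contra h
    obtain ⟨X, hX, -, -, hov⟩ := h4 U hUne subset_rfl h
    have hXU : X \ U = ∅ := Finset.sdiff_eq_empty_iff_subset.2 (h2 X hX)
    rw [hXU] at hov
    exact Finset.not_nonempty_empty hov
  -- singletons belong to F
  have hsing : ∀ u ∈ U, ({u} : Finset V) ∈ F := by
    intro u hu
    by_contra h
    obtain ⟨X, hX, ⟨a, ha⟩, ⟨b, hb⟩, -⟩ := h4 {u} (Finset.singleton_nonempty u)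
      (Finset.singleton_subset_iff.2 hu) h
    simp only [Finset.mem_inter, Finset.mem_sdiff, Finset.mem_singleton] at ha hb
    rw [ha.1] at ha; rw [hb.1] at hb
    exact hb.2 ha.2
  -- laminar trichotomy
  have htri : ∀ X ∈ F, ∀ Y ∈ F, X ⊆ Y ∨ Y ⊆ X ∨ X ∩ Y = ∅ := by
    intro X hX Y hY
    have h := h3 X hX Y hY
    rcases Finset.eq_empty_or_nonempty (X ∩ Y) with he | hi
    · right; right; exact he
    rcases Finset.eq_empty_or_nonempty (X \ Y) with he | hd
    · left; exact Finset.sdiff_eq_empty_iff_subset.1 he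
    rcases Finset.eq_empty_or_nonempty (Y \ X) with he | he2
    · right; left; exact Finset.sdiff_eq_empty_iff_subset.1 he
    exact absurd ⟨hi, hd, he2⟩ h
  rcases Nat.lt_or_ge U.card 2 with hc1 | hc2
  -- base case : |U| = 1
  · have hc : U.card = 1 := by
      have := Finset.card_pos.2 hUne; omega
    have hFU : F = {U} := by
      apply Finset.eq_singleton_iff_unique_mem.2
      refine ⟨hUF, fun X hX => ?_⟩
      obtain ⟨u, hu⟩ := Finset.card_eq_one.1 hc
      subst hu
      obtain ⟨x, hx⟩ := h1 X hX
      have hxu : x = u := Finset.mem_singleton.1 (h2 X hX hx)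
      subst hxu
      exact Finset.eq_singleton_iff_unique_mem.2 ⟨hx,
        fun y hy => Finset.mem_singleton.1 (h2 X hX hy)⟩
    rw [hFU, hc]; simp
  -- inductive step : |U| ≥ 2
  · set F' := F.erase U with hF'
    have hF'sub : ∀ X ∈ F', X ∈ F ∧ X ≠ U := fun X hX =>
      ⟨Finset.mem_of_mem_erase hX, Finset.ne_of_mem_erase hX⟩
    -- every member of F' extends to a maximal member of F'
    have hext : ∀ X ∈ F', ∃ A ∈ F', X ⊆ A ∧ ∀ Y ∈ F', A ⊆ Y → Y = A := by
      intro X hX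
      obtain ⟨A, hA, hAmax⟩ := (F'.filter (fun Z => X ⊆ Z)).exists_max_image
        Finset.card ⟨X, Finset.mem_filter.2 ⟨hX, subset_rfl⟩⟩
      rw [Finset.mem_filter] at hA
      refine ⟨A, hA.1, hA.2, fun Y hY hAY => ?_⟩
      have hYf : Y ∈ F'.filter (fun Z => X ⊆ Z) :=
        Finset.mem_filter.2 ⟨hY, hA.2.trans hAY⟩
      exact (Finset.eq_of_subset_of_card_le hAY (hAmax Y hYf)).symm
    -- any two distinct maximal members are disjoint with union U
    have hkey : ∀ A, A ∈ F' → (∀ Y ∈ F', A ⊆ Y → Y = A) →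
        ∀ B, B ∈ F' → (∀ Y ∈ F', B ⊆ Y → Y = B) → A ≠ B →
        A ∩ B = ∅ ∧ A ∪ B = U := by
      intro A hA hAmax B hB hBmax hne
      have hAF := (hF'sub A hA).1
      have hBF := (hF'sub B hB).1
      have hdisj : A ∩ B = ∅ := by
        rcases htri A hAF B hBF with h | h | h
        · exact absurd (hAmax B hB h) (Ne.symm hne)
        · exact absurd (hBmax A hA h) hne
        · exact h
      refine ⟨hdisj, ?_⟩
      by_contra hUneq
      have hsubU : A ∪ B ⊆ U := Finset.union_subset (h2 A hAF) (h2 B hBF)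
      have hABne : (A ∪ B).Nonempty := (h1 A hAF).mono Finset.subset_union_left
      have hnotF : A ∪ B ∉ F := by
        intro hmem
        have hmem' : A ∪ B ∈ F' := Finset.mem_erase.2 ⟨hUneq, hmem⟩
        have heq := hAmax (A ∪ B) hmem' Finset.subset_union_left
        obtain ⟨b, hb⟩ := h1 B hBF
        have hbA : b ∈ A := heq ▸ (Finset.mem_union_right A hb)
        have hmm : b ∈ A ∩ B := Finset.mem_inter.2 ⟨hbA, hb⟩
        rw [hdisj] at hmm; exact absurd hmm (Finset.notMem_empty b)
      obtain ⟨X, hX, ho1, ho2, ho3⟩ := h4 (A ∪ B) hABne hsubU hnotF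
      have hXne : X ≠ U := by
        rintro rfl
        have he : (A ∪ B) \ X = ∅ := Finset.sdiff_eq_empty_iff_subset.2 hsubU
        rw [he] at ho2; exact Finset.not_nonempty_empty ho2
      have hXF' : X ∈ F' := Finset.mem_erase.2 ⟨hXne, hX⟩
      have hnotsub : ¬ X ⊆ A ∪ B := by
        intro hs
        have he : X \ (A ∪ B) = ∅ := Finset.sdiff_eq_empty_iff_subset.2 hs
        rw [he] at ho3; exact Finset.not_nonempty_empty ho3
      obtain ⟨x, hx⟩ := ho1
      rw [Finset.mem_inter, Finset.mem_union] at hx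
      rcases hx.1 with hxA | hxB
      · rcases htri X hX A hAF with h | h | h
        · exact hnotsub (h.trans Finset.subset_union_left)
        · exact hnotsub ((hAmax X hXF' h) ▸ Finset.subset_union_left)
        · have hmm : x ∈ X ∩ A := Finset.mem_inter.2 ⟨hx.2, hxA⟩
          rw [h] at hmm; exact absurd hmm (Finset.notMem_empty x)
      · rcases htri X hX B hBF with h | h | h
        · exact hnotsub (h.trans Finset.subset_union_right)
        · exact hnotsub ((hBmax X hXF' h) ▸ Finset.subset_union_right)
        · have hmm : x ∈ X ∩ B := Finset.mem_inter.2 ⟨hx.2, hxB⟩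
          rw [h] at hmm; exact absurd hmm (Finset.notMem_empty x)
    -- obtain the two maximal members A and B
    have hsingF' : ∀ x ∈ U, ({x} : Finset V) ∈ F' := by
      intro x hx
      refine Finset.mem_erase.2 ⟨?_, hsing x hx⟩
      intro h
      rw [← h] at hc2; simp at hc2
    obtain ⟨u, hu⟩ := hUne
    obtain ⟨A, hA, huA, hAmax⟩ := hext {u} (hsingF' u hu)
    have hAU : A ≠ U := (hF'sub A hA).2
    have hAsub : A ⊆ U := h2 A (hF'sub A hA).1
    have hUA : (U \ A).Nonempty := by
      rcases Finset.eq_empty_or_nonempty (U \ A) with he | h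
      · exact (hAU (Finset.Subset.antisymm hAsub
          (Finset.sdiff_eq_empty_iff_subset.1 he))).elim
      · exact h
    obtain ⟨b, hb⟩ := hUA
    rw [Finset.mem_sdiff] at hb
    obtain ⟨B, hB, hbB, hBmax⟩ := hext {b} (hsingF' b hb.1)
    have hABne : A ≠ B := by
      rintro rfl
      exact hb.2 (hbB (Finset.mem_singleton_self b))
    obtain ⟨hdisj, hunion⟩ := hkey A hA hAmax B hB hBmax hABne
    -- every member of F' is contained in A or in B
    have hsplit : ∀ X ∈ F', X ⊆ A ∨ X ⊆ B := by
      intro X hX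
      obtain ⟨C, hC, hXC, hCmax⟩ := hext X hX
      rcases eq_or_ne C A with rfl | hCA
      · exact Or.inl hXC
      rcases eq_or_ne C B with rfl | hCB
      · exact Or.inr hXC
      obtain ⟨hdA, -⟩ := hkey C hC hCmax A hA hAmax hCA
      obtain ⟨hdB, -⟩ := hkey C hC hCmax B hB hBmax hCB
      obtain ⟨c, hc⟩ := h1 C (hF'sub C hC).1
      have hcU : c ∈ U := h2 C (hF'sub C hC).1 hc
      rw [← hunion, Finset.mem_union] at hcU
      rcases hcU with h | h
      · have hmm : c ∈ C ∩ A := Finset.mem_inter.2 ⟨hc, h⟩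
        rw [hdA] at hmm; exact absurd hmm (Finset.notMem_empty c)
      · have hmm : c ∈ C ∩ B := Finset.mem_inter.2 ⟨hc, h⟩
        rw [hdB] at hmm; exact absurd hmm (Finset.notMem_empty c)
    -- split F' into the parts below A and below B
    set FA := F'.filter (fun Z => Z ⊆ A) with hFA
    set FB := F'.filter (fun Z => Z ⊆ B) with hFB
    have hF'eq : F' = FA ∪ FB := by
      apply Finset.Subset.antisymm
      · intro X hX
        rcases hsplit X hX with h | h
        · exact Finset.mem_union_left _ (Finset.mem_filter.2 ⟨hX, h⟩)
        · exact Finset.mem_union_right _ (Finset.mem_filter.2 ⟨hX, h⟩)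
      · intro X hX
        rcases Finset.mem_union.1 hX with h | h
        · exact (Finset.mem_filter.1 h).1
        · exact (Finset.mem_filter.1 h).1
    have hFAB : Disjoint FA FB := by
      rw [Finset.disjoint_left]
      intro X hXA hXB
      rw [Finset.mem_filter] at hXA hXB
      obtain ⟨x, hx⟩ := h1 X (hF'sub X hXA.1).1
      have hmm : x ∈ A ∩ B := Finset.mem_inter.2 ⟨hXA.2 hx, hXB.2 hx⟩
      rw [hdisj] at hmm; exact absurd hmm (Finset.notMem_empty x)
    -- the part below C ∈ {A,B} is a maximal laminar family on C
    have hrec : ∀ (C : Finset V), C ⊆ U → C ≠ U → C.Nonempty →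
        (∀ X ∈ F', X ⊆ C ∨ X ∩ C = ∅) →
        (F'.filter (fun Z => Z ⊆ C)).card = 2 * C.card - 1 := by
      intro C hCU hCne hCnonempty hCpart
      have hCss : C ⊂ U := Finset.ssubset_iff_subset_ne.2 ⟨hCU, hCne⟩
      apply IH C hCss _ hCnonempty
      · intro X hX; exact h1 X (hF'sub X (Finset.mem_filter.1 hX).1).1
      · intro X hX; exact (Finset.mem_filter.1 hX).2
      · intro X hX Y hY
        exact h3 X (hF'sub X (Finset.mem_filter.1 hX).1).1
          Y (hF'sub Y (Finset.mem_filter.1 hY).1).1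
      · intro S hSne hSC hSnot
        have hSU : S ⊆ U := hSC.trans hCU
        have hSF : S ∉ F := by
          intro h
          have hSneU : S ≠ U := by
            rintro rfl
            exact hCne (Finset.Subset.antisymm hCU hSC)
          exact hSnot (Finset.mem_filter.2 ⟨Finset.mem_erase.2 ⟨hSneU, h⟩, hSC⟩)
        obtain ⟨X, hX, ho1, ho2, ho3⟩ := h4 S hSne hSU hSF
        have hXneU : X ≠ U := by
          rintro rfl
          have he : S \ X = ∅ := Finset.sdiff_eq_empty_iff_subset.2 hSU
          rw [he] at ho2; exact Finset.not_nonempty_empty ho2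
        have hXF' : X ∈ F' := Finset.mem_erase.2 ⟨hXneU, hX⟩
        rcases hCpart X hXF' with h | h
        · exact ⟨X, Finset.mem_filter.2 ⟨hXF', h⟩, ho1, ho2, ho3⟩
        · obtain ⟨x, hx⟩ := ho1
          rw [Finset.mem_inter] at hx
          have hmm : x ∈ X ∩ C := Finset.mem_inter.2 ⟨hx.2, hSC hx.1⟩
          rw [h] at hmm; exact absurd hmm (Finset.notMem_empty x)
    have hApart : ∀ X ∈ F', X ⊆ A ∨ X ∩ A = ∅ := by
      intro X hX
      rcases hsplit X hX with h | h
      · exact Or.inl h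
      · right
        rw [← Finset.subset_empty, ← hdisj]
        exact fun x hx => Finset.mem_inter.2
          ⟨(Finset.mem_inter.1 hx).2, h (Finset.mem_inter.1 hx).1⟩
    have hBpart : ∀ X ∈ F', X ⊆ B ∨ X ∩ B = ∅ := by
      intro X hX
      rcases hsplit X hX with h | h
      · right
        rw [← Finset.subset_empty, ← hdisj]
        exact fun x hx => Finset.mem_inter.2
          ⟨h (Finset.mem_inter.1 hx).1, (Finset.mem_inter.1 hx).2⟩
      · exact Or.inl h
    have hBU : B ≠ U := (hF'sub B hB).2
    have hBsub : B ⊆ U := h2 B (hF'sub B hB).1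
    have hAne : A.Nonempty := h1 A (hF'sub A hA).1
    have hBne : B.Nonempty := h1 B (hF'sub B hB).1
    have hcA := hrec A hAsub hAU hAne hApart
    have hcB := hrec B hBsub hBU hBne hBpart
    have hcardsum : A.card + B.card = U.card := by
      rw [← hunion]
      rw [Finset.card_union_of_disjoint (Finset.disjoint_iff_inter_eq_empty.2 hdisj)]
    have hFcard : F.card = F'.card + 1 := (Finset.card_erase_add_one hUF).symm
    have hF'card : F'.card = FA.card + FB.card := by
      rw [hF'eq, Finset.card_union_of_disjoint hFAB]
    have hA1 : 1 ≤ A.card := Finset.card_pos.2 hAne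
    have hB1 : 1 ≤ B.card := Finset.card_pos.2 hBne
    rw [hFcard, hF'card]
    rw [← hFA] at hcA
    rw [← hFB] at hcB
    omega

lemma compl_nonempty_of_ne_univ {V : Type*} [DecidableEq V] [Fintype V] {X : Finset V}
    (h : X ≠ Finset.univ) : Xᶜ.Nonempty := by
  rw [← Finset.card_pos, Finset.card_compl]
  have : X.card < Fintype.card V := Finset.card_lt_card (Finset.ssubset_univ_iff.2 h)
  omega

/-- A maximal cross-free family of cuts of a graph on `n ≥ 2` vertices has exactly `2n-3`
members.  The family is given by one shore per cut; distinct members define distinct cuts. -/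
theorem stmt10 {V : Type*} [DecidableEq V] [Fintype V] (n : ℕ) (hn : 2 ≤ n)
    (hcard : Fintype.card V = n)
    (L : Finset (Finset V))
    (hshore : ∀ X ∈ L, isCutShore X)
    (hdist : ∀ X ∈ L, ∀ Y ∈ L, X ≠ Y → Y ≠ Xᶜ)
    (hcrossfree : ∀ X ∈ L, ∀ Y ∈ L, ¬ crossing X Y)
    (hmax : ∀ X : Finset V, isCutShore X → X ∉ L → Xᶜ ∉ L → ∃ Y ∈ L, crossing X Y) :
    L.card = 2 * n - 3 := by
  classical
  have hV2 : 2 ≤ Fintype.card V := hcard ▸ hn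
  have hVpos : 0 < Fintype.card V := by omega
  obtain ⟨v⟩ := Fintype.card_pos_iff.1 hVpos
  set U : Finset V := Finset.univ.erase v with hUdef
  have hUcard : U.card = n - 1 := by
    rw [hUdef, Finset.card_erase_of_mem (Finset.mem_univ v), Finset.card_univ, hcard]
  have hUne : U.Nonempty := by
    rw [← Finset.card_pos, hUcard]; omega
  have hmemU : ∀ x : V, x ∈ U ↔ x ≠ v := by
    intro x; simp [hUdef]
  set φ : Finset V → Finset V := fun X => if v ∈ X then Xᶜ else X with hφ
  have hφ_nv : ∀ X, v ∉ φ X := by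
    intro X; by_cases h : v ∈ X <;> simp [hφ, h]
  have hφ_subU : ∀ X, φ X ⊆ U := by
    intro X x hx
    rw [hmemU]
    rintro rfl
    exact hφ_nv X hx
  have hcl : ∀ X Y : Finset V, crossing (φ X) Y ↔ crossing X Y := by
    intro X Y
    by_cases h : v ∈ X <;> simp [hφ, h, crossing_compl_left]
  have hcr : ∀ X Y : Finset V, crossing X (φ Y) ↔ crossing X Y := by
    intro X Y
    by_cases h : v ∈ Y <;> simp [hφ, h, crossing_compl_right]
  set F : Finset (Finset V) := L.image φ with hF
  have hinj : Set.InjOn φ L := by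
    intro X hX Y hY hXY
    by_cases hx : v ∈ X <;> by_cases hy : v ∈ Y
    · simp only [hφ, if_pos hx, if_pos hy] at hXY
      exact compl_inj_iff.1 hXY
    · simp only [hφ, if_pos hx, if_neg hy] at hXY
      have hne : X ≠ Y := by rintro rfl; exact hy hx
      exact absurd hXY.symm (hdist X hX Y hY hne)
    · simp only [hφ, if_neg hx, if_pos hy] at hXY
      have hne : Y ≠ X := by rintro rfl; exact hx hy
      exact absurd (hXY.symm ▸ rfl : X = Yᶜ) (hdist Y hY X hX hne)
    · simpa [hφ, if_neg hx, if_neg hy] using hXY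
  have hFcard : F.card = L.card := Finset.card_image_of_injOn hinj
  have key := laminar_card U F hUne ?_ ?_ ?_ ?_
  · rw [hUcard] at key
    omega
  · intro X hX
    obtain ⟨Y, hY, rfl⟩ := Finset.mem_image.1 hX
    by_cases h : v ∈ Y
    · simp only [hφ, if_pos h]
      exact compl_nonempty_of_ne_univ (hshore Y hY).2
    · simp only [hφ, if_neg h]
      exact (hshore Y hY).1
  · intro X hX
    obtain ⟨Y, hY, rfl⟩ := Finset.mem_image.1 hX
    exact hφ_subU Y
  · intro X hX Y hY hov
    obtain ⟨X', hX', rfl⟩ := Finset.mem_image.1 hX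
    obtain ⟨Y', hY', rfl⟩ := Finset.mem_image.1 hY
    have hcross : crossing (φ X') (φ Y') :=
      crossing_of_overlap hov (hφ_nv X') (hφ_nv Y')
    exact hcrossfree X' hX' Y' hY' ((hcl X' Y').1 ((hcr (φ X') Y').1 hcross))
  · intro S hSne hSU hSF
    have hvS : v ∉ S := fun h => by
      have := (hmemU v).1 (hSU h); exact this rfl
    have hSuniv : S ≠ Finset.univ := by
      rintro rfl; exact hvS (Finset.mem_univ v)
    have hSL : S ∉ L := by
      intro h
      exact hSF (Finset.mem_image.2 ⟨S, h, by simp [hφ, hvS]⟩)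
    have hScL : Sᶜ ∉ L := by
      intro h
      refine hSF (Finset.mem_image.2 ⟨Sᶜ, h, ?_⟩)
      have : v ∈ Sᶜ := Finset.mem_compl.2 hvS
      simp [hφ, this]
    obtain ⟨Y, hY, hcross⟩ := hmax S ⟨hSne, hSuniv⟩ hSL hScL
    refine ⟨φ Y, Finset.mem_image.2 ⟨Y, hY, rfl⟩, ?_⟩
    exact overlap_of_crossing ((hcr S Y).2 hcross)
end

section
/- Let ℱ ⊆ 2^V be a family closed under overlaps (if X, Y ∈ ℱ overlap then X∩Y, X∪Y ∈ ℱ), and let 𝒢 ⊆ ℱ be a maximal laminar subfamily of ℱ. For X ∈ ℱ\𝒢 and Y ∈ 𝒢 overlapping X, we have overlap_𝒢(X∩Y) ⊊ overlap_𝒢(X) and overlap_𝒢(X∪Y) ⊊ overlap_𝒢(X), where overlap_𝒢(Z) = {W ∈ 𝒢 : W and Z overlap}. -/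
/-- Two sets overlap if their intersection and both differences are nonempty. -/
def soverlap {V : Type*} (X Y : Set V) : Prop :=
  (X ∩ Y).Nonempty ∧ (X \ Y).Nonempty ∧ (Y \ X).Nonempty

lemma lam_cases {V : Type*} {W Y : Set V} (h : ¬ soverlap W Y) :
    W ∩ Y = ∅ ∨ W ⊆ Y ∨ Y ⊆ W := by
  by_contra hc
  push_neg at hc
  obtain ⟨h1, h2, h3⟩ := hc
  exact h ⟨h1, Set.diff_nonempty.2 h2, Set.diff_nonempty.2 h3⟩

/-- Jain's uncrossing lemma on overlaps: for a family `F` closed under overlaps, a maximal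
laminar subfamily `G`, `X ∈ F \ G` and `Y ∈ G` overlapping `X`, the members of `G`
overlapping `X ∩ Y` (resp. `X ∪ Y`) form a strict subset of those overlapping `X`. -/
theorem stmt12 {V : Type*} (F G : Set (Set V))
    (hclosed : ∀ X ∈ F, ∀ Y ∈ F, soverlap X Y → X ∩ Y ∈ F ∧ X ∪ Y ∈ F)
    (hGF : G ⊆ F)
    (hlaminar : ∀ X ∈ G, ∀ Y ∈ G, ¬ soverlap X Y)
    (hmaximal : ∀ X ∈ F, X ∉ G → ∃ Y ∈ G, soverlap X Y)
    (X : Set V) (hXF : X ∈ F) (hXG : X ∉ G)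
    (Y : Set V) (hYG : Y ∈ G) (hXY : soverlap X Y) :
    {W ∈ G | soverlap W (X ∩ Y)} ⊂ {W ∈ G | soverlap W X} ∧
    {W ∈ G | soverlap W (X ∪ Y)} ⊂ {W ∈ G | soverlap W X} := by
  obtain ⟨hxy1, hxy2, hxy3⟩ := hXY
  have hYX : soverlap Y X := ⟨by rwa [Set.inter_comm], hxy3, hxy2⟩
  constructor
  · constructor
    · rintro W ⟨hWG, hW1, hW2, hW3⟩
      refine ⟨hWG, hW1.mono (fun v hv => ⟨hv.1, hv.2.1⟩), ?_,
        hW3.mono (fun v hv => ⟨hv.1.1, hv.2⟩)⟩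
      -- show (W \ X).Nonempty
      rw [Set.diff_nonempty]
      intro hWX
      rcases lam_cases (hlaminar W hWG Y hYG) with hd | hs | hs
      · -- W ∩ Y = ∅ but W ∩ (X ∩ Y) nonempty
        obtain ⟨v, hv⟩ := hW1
        have hm : v ∈ W ∩ Y := ⟨hv.1, hv.2.2⟩
        rw [hd] at hm; exact hm
      · -- W ⊆ Y, so W ⊆ X ∩ Y, contradicting (W \ (X ∩ Y)).Nonempty
        obtain ⟨v, hv⟩ := hW2
        exact hv.2 ⟨hWX hv.1, hs hv.1⟩
      · -- Y ⊆ W ⊆ X contradicts (Y \ X).Nonempty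
        obtain ⟨v, hv⟩ := hxy3
        exact hv.2 (hWX (hs hv.1))
    · intro hsup
      have : Y ∈ {W ∈ G | soverlap W (X ∩ Y)} := hsup ⟨hYG, hYX⟩
      obtain ⟨v, hv⟩ := this.2.2.2
      exact hv.2 hv.1.2
  · constructor
    · rintro W ⟨hWG, hW1, hW2, hW3⟩
      have hWnX : (W \ X).Nonempty := hW2.mono (fun v hv => ⟨hv.1, fun h => hv.2 (Or.inl h)⟩)
      rcases lam_cases (hlaminar W hWG Y hYG) with hd | hs | hs
      · refine ⟨hWG, ?_, hWnX, ?_⟩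
        · obtain ⟨v, hv⟩ := hW1
          rcases hv.2 with h | h
          · exact ⟨v, hv.1, h⟩
          · exact absurd (show v ∈ W ∩ Y from ⟨hv.1, h⟩) (by rw [hd]; exact Set.notMem_empty v)
        · -- X \ W nonempty: if X ⊆ W then X ∩ Y ⊆ W ∩ Y = ∅
          rw [Set.diff_nonempty]
          intro hXW
          obtain ⟨v, hv⟩ := hxy1
          exact absurd (show v ∈ W ∩ Y from ⟨hXW hv.1, hv.2⟩) (by rw [hd]; exact Set.notMem_empty v)
      · -- W ⊆ Y contradicts (W \ (X ∪ Y)).Nonempty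
        obtain ⟨v, hv⟩ := hW2
        exact absurd (Or.inr (hs hv.1)) hv.2
      · -- Y ⊆ W
        refine ⟨hWG, hxy1.mono (fun v hv => ⟨hs hv.2, hv.1⟩), hWnX, ?_⟩
        rw [Set.diff_nonempty]
        intro hXW
        obtain ⟨v, hv⟩ := hW3
        rcases hv.1 with h | h
        · exact hv.2 (hXW h)
        · exact hv.2 (hs h)
    · intro hsup
      have : Y ∈ {W ∈ G | soverlap W (X ∪ Y)} := hsup ⟨hYG, hYX⟩
      obtain ⟨v, hv⟩ := this.2.2.1
      exact hv.2 (Or.inr hv.1)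
end
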